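/- arXiv:1607.07955 — 5 statements merged into one kernel-verified Lean document; each statement's English description precedes it below -/
import Mathlib

section
/- For all integers m and k with 1 ≤ k ≤ m, the identity ∂_i^k(L_m) = (Σ_{l=0}^{k−1} (a^l − a^{m−1−l}·b))·∂_i^{k−1}(L_{m−1}) + a^k·x_i·∂_i^k(L_{m−1}) − ∂_i^k(L_{m−1})·x_i holds in T. -/
noncomputable section

/-- The `ℤⁿ`-degree of a word: the multidegree counting occurrences of each letter. -/
def degw {n : ℕ} (w : FreeMonoid (Fin n)) : Fin n → ℕ :=
  fun k => (FreeMonoid.toList w).count k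

/-- The word `u` viewed as an element of the free algebra `T = F⟨x_1,…,x_n⟩`,
realized as the monoid algebra of the free monoid on `n` letters. -/
def wordOf (F : Type) [Field F] {n : ℕ} (u : FreeMonoid (Fin n)) :
    MonoidAlgebra F (FreeMonoid (Fin n)) :=
  MonoidAlgebra.of F (FreeMonoid (Fin n)) u

/-- `x` is `ℤⁿ`-homogeneous of degree `d`: every word occurring in `x` has degree `d`. -/
def IsHomog (F : Type) [Field F] {n : ℕ}
    (x : MonoidAlgebra F (FreeMonoid (Fin n))) (d : Fin n → ℕ) : Prop :=
  ∀ w ∈ (x.coeff : FreeMonoid (Fin n) →₀ F).support, degw w = d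

/-! ### Auxiliary lemmas -/

section Aux

variable {F : Type} [Field F] {n : ℕ}

attribute [local instance] Classical.decEq

set_option linter.unnecessarySeqFocus false

lemma degw_mul (u v : FreeMonoid (Fin n)) : degw (u * v) = degw u + degw v := by
  funext k
  simp [degw, FreeMonoid.toList_mul, List.count_append]

lemma degw_of (k l : Fin n) : degw (FreeMonoid.of k) l = if k = l then 1 else 0 := by
  simp [degw, FreeMonoid.toList_of, List.count_cons, List.count_nil, beq_iff_eq]

lemma wordOf_mul (u v : FreeMonoid (Fin n)) : wordOf F (u * v) = wordOf F u * wordOf F v :=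
  map_mul (MonoidAlgebra.of F (FreeMonoid (Fin n))) u v

lemma wordOf_one : wordOf F (1 : FreeMonoid (Fin n)) = 1 := rfl

lemma homog_wordOf (u : FreeMonoid (Fin n)) : IsHomog F (wordOf F u) (degw u) := by
  intro w hw
  have : w = u := by
    simpa [wordOf, MonoidAlgebra.of_apply] using Finsupp.support_single_subset hw
  rw [this]

lemma homog_zero (d : Fin n → ℕ) : IsHomog F (0 : MonoidAlgebra F (FreeMonoid (Fin n))) d := by
  intro w hw; simp at hw

lemma homog_smul {x : MonoidAlgebra F (FreeMonoid (Fin n))} {d : Fin n → ℕ} (c : F)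
    (hx : IsHomog F x d) : IsHomog F (c • x) d := by
  intro w hw
  exact hx w (Finsupp.support_smul hw)

lemma homog_add {x y : MonoidAlgebra F (FreeMonoid (Fin n))} {d : Fin n → ℕ}
    (hx : IsHomog F x d) (hy : IsHomog F y d) : IsHomog F (x + y) d := by
  intro w hw
  rcases Finset.mem_union.1 (Finsupp.support_add hw) with h | h
  · exact hx w h
  · exact hy w h

lemma homog_sub {x y : MonoidAlgebra F (FreeMonoid (Fin n))} {d : Fin n → ℕ}
    (hx : IsHomog F x d) (hy : IsHomog F y d) : IsHomog F (x - y) d := by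
  rw [sub_eq_add_neg]
  refine homog_add hx ?_
  intro w hw
  rw [MonoidAlgebra.coeff_neg, Finsupp.support_neg] at hw
  exact hy w hw

lemma homog_mul {x y : MonoidAlgebra F (FreeMonoid (Fin n))} {d e : Fin n → ℕ}
    (hx : IsHomog F x d) (hy : IsHomog F y e) : IsHomog F (x * y) (d + e) := by
  classical
  intro w hw
  have := MonoidAlgebra.support_coeff_mul_subset x y hw
  rw [Finset.mem_mul] at this
  obtain ⟨u, hu, v, hv, rfl⟩ := this
  rw [degw_mul, hx u hu, hy v hv]

lemma homog_sum {ι : Type*} {s : Finset ι} {f : ι → MonoidAlgebra F (FreeMonoid (Fin n))}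
    {d : Fin n → ℕ} (h : ∀ a ∈ s, IsHomog F (f a) d) :
    IsHomog F (∑ a ∈ s, f a) d := by
  classical
  induction s using Finset.induction_on with
  | empty => simpa using homog_zero d
  | insert _ _ hnotmem ih =>
    rw [Finset.sum_insert hnotmem]
    exact homog_add (h _ (Finset.mem_insert_self _ _))
      (ih fun a ha => h a (Finset.mem_insert_of_mem ha))

lemma homog_congr {x : MonoidAlgebra F (FreeMonoid (Fin n))} {d e : Fin n → ℕ}
    (hx : IsHomog F x d) (h : d = e) : IsHomog F x e := h ▸ hx

/-- the degree of `∂_i^k L_M`. -/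
def dd (n : ℕ) (i j : Fin n) (M k : ℕ) : Fin n → ℕ :=
  fun l => if l = i then M - k else if l = j then 1 else 0

lemma prod_dd (q : Fin n → Fin n → F) (i j : Fin n) (hij : i ≠ j) (M k : ℕ) :
    ∏ l : Fin n, (q i l)⁻¹ ^ dd n i j M k l = (q i i)⁻¹ ^ (M - k) * (q i j)⁻¹ := by
  have h : ∀ l : Fin n, (q i l)⁻¹ ^ dd n i j M k l
      = (if l = i then (q i i)⁻¹ ^ (M - k) else 1) * (if l = j then (q i j)⁻¹ else 1) := by
    intro l
    unfold dd
    by_cases h1 : l = i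
    · subst h1
      rw [if_pos rfl, if_pos rfl, if_neg hij, mul_one]
    · rw [if_neg h1, if_neg h1]
      by_cases h2 : l = j
      · subst h2; rw [if_pos rfl, if_pos rfl, pow_one, one_mul]
      · rw [if_neg h2, if_neg h2, pow_zero, one_mul]
  rw [Finset.prod_congr rfl (fun l _ => h l), Finset.prod_mul_distrib,
    Finset.prod_ite_eq' Finset.univ i (fun _ => (q i i)⁻¹ ^ (M - k)),
    Finset.prod_ite_eq' Finset.univ j (fun _ => (q i j)⁻¹),
    if_pos (Finset.mem_univ i), if_pos (Finset.mem_univ j)]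

lemma prod_e (q : Fin n → Fin n → F) (i : Fin n) :
    ∏ l : Fin n, (q i l)⁻¹ ^ degw (FreeMonoid.of i) l = (q i i)⁻¹ := by
  have h : ∀ l : Fin n, (q i l)⁻¹ ^ degw (FreeMonoid.of i) l
      = if l = i then (q i i)⁻¹ else 1 := by
    intro l
    rw [degw_of]
    by_cases h1 : l = i
    · subst h1; rw [if_pos rfl, if_pos rfl, pow_one]
    · rw [if_neg (fun h => h1 h.symm), if_neg h1, pow_zero]
  rw [Finset.prod_congr rfl (fun l _ => h l),
    Finset.prod_ite_eq' Finset.univ i (fun _ => (q i i)⁻¹), if_pos (Finset.mem_univ i)]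

lemma homog_L (i j : Fin n) (hij : i ≠ j)
    (L : ℕ → MonoidAlgebra F (FreeMonoid (Fin n)))
    (hL0 : L 0 = wordOf F (FreeMonoid.of j))
    (hLs : ∀ m : ℕ, L (m + 1) =
      wordOf F (FreeMonoid.of i) * L m - L m * wordOf F (FreeMonoid.of i)) :
    ∀ M, IsHomog F (L M) (dd n i j M 0) := by
  intro M
  induction M with
  | zero =>
    rw [hL0]
    refine homog_congr (homog_wordOf _) ?_
    funext l
    rw [degw_of]
    unfold dd
    by_cases h1 : l = i
    · subst h1; rw [if_neg (fun h => hij h.symm), if_pos rfl]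
    · rw [if_neg h1]
      by_cases h2 : l = j
      · subst h2; simp
      · rw [if_neg (fun h => h2 h.symm), if_neg h2]
  | succ M ih =>
    rw [hLs]
    have he : dd n i j M 0 + degw (FreeMonoid.of i) = dd n i j (M + 1) 0 := by
      funext l
      simp only [Pi.add_apply, degw_of, dd]
      by_cases h1 : l = i
      · subst h1; simp
      · rw [if_neg h1, if_neg (fun h : i = l => h1 h.symm), add_zero, if_neg h1]
    have he' : degw (FreeMonoid.of i) + dd n i j M 0 = dd n i j (M + 1) 0 := by
      rw [add_comm, he]
    exact homog_sub
      (homog_congr (homog_mul (homog_wordOf _) ih) he')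
      (homog_congr (homog_mul ih (homog_wordOf _)) he)

section D

variable (q : Fin n → Fin n → F)
  (D : Fin n → Module.End F (MonoidAlgebra F (FreeMonoid (Fin n))))
  (hD1 : ∀ i, D i 1 = 0)
  (hDx : ∀ i k : Fin n, D i (wordOf F (FreeMonoid.of k)) = if i = k then 1 else 0)
  (hDmul : ∀ (i : Fin n) (u v : MonoidAlgebra F (FreeMonoid (Fin n))) (d : Fin n → ℕ),
      IsHomog F u d →
      D i (u * v) = D i u * v + (∏ k : Fin n, (q i k)⁻¹ ^ d k) • (u * D i v))

include hD1 hDx hDmul in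
lemma D_word_vanish (i : Fin n) (u : FreeMonoid (Fin n)) (h : degw u i = 0) :
    D i (wordOf F u) = 0 := by
  induction u using FreeMonoid.recOn with
  | one => rw [wordOf_one]; exact hD1 i
  | of_mul k u ih =>
    have h' : degw u i = 0 ∧ k ≠ i := by
      have := congrFun (degw_mul (FreeMonoid.of k) u) i
      rw [h] at this
      simp only [Pi.add_apply, degw_of] at this
      constructor
      · omega
      · intro hk; rw [if_pos hk] at this; omega
    rw [wordOf_mul, hDmul i _ _ _ (homog_wordOf _), hDx,
      if_neg (fun hik => h'.2 hik.symm), zero_mul, ih h'.1, mul_zero, smul_zero, add_zero]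

include hD1 hDx hDmul in
lemma D_word_homog (i : Fin n) (u : FreeMonoid (Fin n)) :
    IsHomog F (D i (wordOf F u)) (Function.update (degw u) i (degw u i - 1)) := by
  induction u using FreeMonoid.recOn with
  | one => rw [wordOf_one, hD1]; exact homog_zero _
  | of_mul k u ih =>
    rw [wordOf_mul, hDmul i _ _ _ (homog_wordOf _), hDx]
    apply homog_add
    · by_cases hik : i = k
      · rw [if_pos hik, one_mul]
        have h2 : Function.update (degw (FreeMonoid.of k * u)) i (degw (FreeMonoid.of k * u) i - 1)
            = degw u := by
          funext l
          by_cases hl : l = i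
          · subst hl
            rw [Function.update_self]
            simp only [degw_mul, Pi.add_apply, degw_of, if_pos hik.symm]
            omega
          · rw [Function.update_of_ne hl]
            simp only [degw_mul, Pi.add_apply, degw_of,
              if_neg (show k ≠ l by rintro rfl; exact hl hik.symm), zero_add]
        rw [h2]
        exact homog_wordOf u
      · rw [if_neg hik, zero_mul]; exact homog_zero _
    · by_cases h0 : degw u i = 0
      · rw [D_word_vanish q D hD1 hDx hDmul i u h0, mul_zero, smul_zero]; exact homog_zero _
      · apply homog_smul
        have hm := homog_mul (homog_wordOf (F := F) (FreeMonoid.of k)) ih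
        have h3 : degw (FreeMonoid.of k) + Function.update (degw u) i (degw u i - 1)
            = Function.update (degw (FreeMonoid.of k * u)) i (degw (FreeMonoid.of k * u) i - 1) := by
          funext l
          simp only [Pi.add_apply, Function.update_apply, degw_mul, degw_of]
          by_cases hl : l = i <;> simp only [hl, if_true, if_false] <;> omega
        rwa [h3] at hm

include hD1 hDx hDmul in
lemma homog_D (i : Fin n) {x : MonoidAlgebra F (FreeMonoid (Fin n))} {d : Fin n → ℕ}
    (hx : IsHomog F x d) : IsHomog F (D i x) (Function.update d i (d i - 1)) := by
  have hx' : x = ∑ w ∈ x.coeff.support,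
      x.coeff w • wordOf F w := by
    conv_lhs => rw [← MonoidAlgebra.sum_coeff_single x]
    rw [Finsupp.sum]
    refine Finset.sum_congr rfl fun w _ => ?_
    rw [wordOf, MonoidAlgebra.of_apply, MonoidAlgebra.smul_single', mul_one]
  rw [hx', map_sum]
  apply homog_sum
  intro w hw
  rw [map_smul]
  apply homog_smul
  have h1 := D_word_homog q D hD1 hDx hDmul i w
  rwa [hx w hw] at h1

include hD1 hDx hDmul in
lemma homog_DkL (i j : Fin n) (hij : i ≠ j)
    (L : ℕ → MonoidAlgebra F (FreeMonoid (Fin n)))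
    (hL0 : L 0 = wordOf F (FreeMonoid.of j))
    (hLs : ∀ m : ℕ, L (m + 1) =
      wordOf F (FreeMonoid.of i) * L m - L m * wordOf F (FreeMonoid.of i)) :
    ∀ (k M : ℕ), IsHomog F ((D i ^ k) (L M)) (dd n i j M k) := by
  intro k
  induction k with
  | zero =>
    intro M
    rw [pow_zero, Module.End.one_apply]
    exact homog_L i j hij L hL0 hLs M
  | succ k ih =>
    intro M
    rw [pow_succ', Module.End.mul_apply]
    refine homog_congr (homog_D q D hD1 hDx hDmul i (ih M)) ?_
    funext l
    rw [Function.update_apply]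
    unfold dd
    by_cases h1 : l = i
    · subst h1; simp only [if_pos rfl, eq_self_iff_true, if_true]; omega
    · rw [if_neg h1, if_neg h1, if_neg h1]

end D

end Aux

/-- the recursion formula for `∂_i^k(L_m)`, `1 ≤ k ≤ m`, where
`a = q_{ii}⁻¹`, `b = q_{ij}⁻¹`, `L_0 = x_j` and `L_m = x_i L_{m−1} − L_{m−1} x_i`. -/
theorem stmt_1 (F : Type) [Field F] [CharZero F] (n : ℕ) (hn : 2 ≤ n)
    (q : Fin n → Fin n → F) (hq : ∀ k l, q k l ≠ 0)
    (D : Fin n → Module.End F (MonoidAlgebra F (FreeMonoid (Fin n))))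
    (hD1 : ∀ i, D i 1 = 0)
    (hDx : ∀ i k : Fin n, D i (wordOf F (FreeMonoid.of k)) = if i = k then 1 else 0)
    (hDmul : ∀ (i : Fin n) (u v : MonoidAlgebra F (FreeMonoid (Fin n))) (d : Fin n → ℕ),
      IsHomog F u d →
      D i (u * v) = D i u * v + (∏ k : Fin n, (q i k)⁻¹ ^ d k) • (u * D i v))
    (i j : Fin n) (hij : i ≠ j)
    (L : ℕ → MonoidAlgebra F (FreeMonoid (Fin n)))
    (hL0 : L 0 = wordOf F (FreeMonoid.of j))
    (hLs : ∀ m : ℕ, L (m + 1) =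
      wordOf F (FreeMonoid.of i) * L m - L m * wordOf F (FreeMonoid.of i))
    (k m : ℕ) (hk : 1 ≤ k) (hkm : k ≤ m) :
    (D i ^ k) (L m) =
      (∑ l ∈ Finset.range k, ((q i i)⁻¹ ^ l - (q i i)⁻¹ ^ (m - 1 - l) * (q i j)⁻¹)) •
          (D i ^ (k - 1)) (L (m - 1))
        + (q i i)⁻¹ ^ k • (wordOf F (FreeMonoid.of i) * (D i ^ k) (L (m - 1)))
        - (D i ^ k) (L (m - 1)) * wordOf F (FreeMonoid.of i) := by
  obtain ⟨M, rfl⟩ : ∃ M, m = M + 1 := ⟨m - 1, by omega⟩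
  simp only [Nat.add_sub_cancel]
  -- derivative of x_i * u
  have hDl : ∀ u : MonoidAlgebra F (FreeMonoid (Fin n)),
      D i (wordOf F (FreeMonoid.of i) * u)
        = u + (q i i)⁻¹ • (wordOf F (FreeMonoid.of i) * D i u) := by
    intro u
    rw [hDmul i _ u (degw (FreeMonoid.of i)) (homog_wordOf _), hDx i i, if_pos rfl, one_mul,
      prod_e q i]
  -- derivative of u * x_i  for u homogeneous of degree dd M k'
  have hDr : ∀ (k' M' : ℕ) (u : MonoidAlgebra F (FreeMonoid (Fin n))),
      IsHomog F u (dd n i j M' k') →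
      D i (u * wordOf F (FreeMonoid.of i))
        = D i u * wordOf F (FreeMonoid.of i) + ((q i i)⁻¹ ^ (M' - k') * (q i j)⁻¹) • u := by
    intro k' M' u hu
    rw [hDmul i u _ (dd n i j M' k') hu, hDx i i, if_pos rfl, mul_one, prod_dd q i j hij]
  revert hkm
  induction k, hk using Nat.le_induction with
  | base =>
    intro _
    simp only [pow_one, Nat.sub_self, pow_zero, Module.End.one_apply, Finset.sum_range_one,
      Nat.sub_zero]
    rw [hLs M, map_sub, hDl (L M), hDr 0 M (L M) (homog_L i j hij L hL0 hLs M), Nat.sub_zero]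
    module
  | succ k hk1 ih =>
    intro hkm1
    have IH := ih (by omega)
    have hpow : ∀ x : MonoidAlgebra F (FreeMonoid (Fin n)),
        (D i ^ (k + 1)) x = D i ((D i ^ k) x) := by
      intro x; rw [pow_succ', Module.End.mul_apply]
    have hpow' : ∀ x : MonoidAlgebra F (FreeMonoid (Fin n)),
        D i ((D i ^ (k - 1)) x) = (D i ^ k) x := by
      intro x
      conv_rhs => rw [show k = (k - 1) + 1 by omega]
      rw [pow_succ', Module.End.mul_apply]
    rw [hpow (L (M + 1)), IH, map_sub, map_add, map_smul, map_smul, hpow' (L M),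
      hDl ((D i ^ k) (L M)),
      hDr k M ((D i ^ k) (L M)) (homog_DkL q D hD1 hDx hDmul i j hij L hL0 hLs k M),
      ← hpow (L M), Nat.add_sub_cancel, Finset.sum_range_succ]
    module

end
end

section
/- Every nonempty standard word u admits a factorization u = u_1·u_2·⋯·u_r with u_1 ≥ u_2 ≥ ⋯ ≥ u_r in the lexicographic order, where each u_i is a Lyndon word that is standard with respect to R. -/
namespace CFLAux

variable {α : Type*} [LinearOrder α]

theorem lex_irrefl : ∀ l : List α, ¬ List.Lex (· < ·) l l
  | a :: l, h => by
    cases h with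
    | cons h => exact lex_irrefl l h
    | rel h => exact lt_irrefl a h

theorem lex_trans : ∀ {l₁ l₂ l₃ : List α},
    List.Lex (· < ·) l₁ l₂ → List.Lex (· < ·) l₂ l₃ → List.Lex (· < ·) l₁ l₃
  | _, _, _, .nil, .cons _ => .nil
  | _, _, _, .nil, .rel _ => .nil
  | _, _, _, .cons h₁, .cons h₂ => .cons (lex_trans h₁ h₂)
  | _, _, _, .cons _, .rel h => .rel h
  | _, _, _, .rel h, .cons _ => .rel h
  | _, _, _, .rel h₁, .rel h₂ => .rel (h₁.trans h₂)

theorem lex_cancel_left : ∀ (c : List α) {s t : List α},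
    List.Lex (· < ·) (c ++ s) (c ++ t) → List.Lex (· < ·) s t
  | [], _, _, h => h
  | a :: c, s, t, h => by
    cases h with
    | cons h => exact lex_cancel_left c h
    | rel h => exact absurd h (lt_irrefl a)

theorem lexA : ∀ (s t : List α), s.length = t.length → List.Lex (· < ·) s t →
    ∀ (X Y : List α), List.Lex (· < ·) (s ++ X) (t ++ Y)
  | [], _, hl, h, _, _ => by cases h <;> simp at hl
  | a :: s, [], _, h, _, _ => by cases h
  | a :: s, b :: t, hl, h, X, Y => by
    cases h with
    | cons h => exact .cons (lexA s t (by simpa using hl) h X Y)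
    | rel h => exact .rel h

theorem lexD : ∀ {s t : List α}, List.Lex (· < ·) s t →
    s <+: t ∨ ∃ c a b s' t', s = c ++ a :: s' ∧ t = c ++ b :: t' ∧ a < b := by
  intro s t h
  induction h with
  | nil => exact Or.inl (List.nil_prefix)
  | @rel a l₁ b l₂ h => exact Or.inr ⟨[], a, b, l₁, l₂, rfl, rfl, h⟩
  | @cons a l₁ l₂ h ih =>
    rcases ih with ⟨w, rfl⟩ | ⟨c, x, y, s', t', rfl, rfl, hxy⟩
    · exact Or.inl ⟨w, rfl⟩
    · exact Or.inr ⟨a :: c, x, y, s', t', rfl, rfl, hxy⟩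

/-- Lyndon on the list level. -/
def Lyn (l : List α) : Prop :=
  l ≠ [] ∧ ∀ v w : List α, v ≠ [] → w ≠ [] → l = v ++ w → List.Lex (· < ·) l (w ++ v)

theorem lyn_singleton (a : α) : Lyn [a] := by
  refine ⟨by simp, fun v w hv hw he => ?_⟩
  exfalso
  have h := congrArg List.length he
  simp only [List.length_append, List.length_cons, List.length_nil] at h
  have h1 := List.length_pos_iff.mpr hv
  have h2 := List.length_pos_iff.mpr hw
  omega

theorem lyn_suffix {l v s : List α} (hl : Lyn l) (hv : v ≠ []) (hs : s ≠ []) (he : l = v ++ s) :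
    List.Lex (· < ·) l s := by
  have hrot := hl.2 v s hv hs he
  by_cases hp : s <+: l
  · obtain ⟨t, rfl⟩ := hp
    have ht : t ≠ [] := by
      rintro rfl
      have := congrArg List.length he
      simp only [List.append_nil, List.length_append] at this
      have := List.length_pos_iff.mpr hv
      omega
    have hlen : t.length = v.length := by
      have := congrArg List.length he
      simp only [List.length_append] at this
      omega
    have h2 : List.Lex (· < ·) t v := lex_cancel_left s hrot
    have h3 := lexA t v hlen h2 s s
    rw [← he] at h3
    have h4 := hl.2 s t hs ht rfl
    exact absurd (lex_trans h3 h4) (lex_irrefl _)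
  · rcases lexD hrot with hpre | ⟨c, a, b, l', t', he1, he2, hab⟩
    · exfalso
      have hlen : l.length = (s ++ v).length := by
        subst he; simp only [List.length_append]; omega
      have : l = s ++ v := hpre.eq_of_length hlen
      exact hp ⟨v, this.symm⟩
    · by_cases hcs : s <+: c
      · exfalso
        obtain ⟨d, rfl⟩ := hcs
        exact hp ⟨d ++ a :: l', by rw [he1, List.append_assoc]⟩
      · have hc2 : c <+: s ++ v := ⟨b :: t', he2.symm⟩
        have hcl : c.length ≤ s.length := by
          by_contra hlt
          exact hcs (List.prefix_of_prefix_length_le (List.prefix_append s v) hc2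
            (le_of_not_ge hlt))
        obtain ⟨d, rfl⟩ := List.prefix_of_prefix_length_le hc2 (List.prefix_append s v) hcl
        have hd : d ≠ [] := by
          rintro rfl
          exact hcs (by simp)
        obtain ⟨x, d', rfl⟩ := List.exists_cons_of_ne_nil hd
        have hx : x = b := by
          rw [List.append_assoc] at he2
          have := List.append_cancel_left he2
          exact List.head_eq_of_cons_eq this
        subst hx
        rw [he1]
        exact List.Lex.append_left _ (List.Lex.rel hab) c

theorem lyn_of_suffix {l : List α} (h0 : l ≠ [])
    (h : ∀ v s : List α, v ≠ [] → s ≠ [] → l = v ++ s → List.Lex (· < ·) l s) : Lyn l := by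
  refine ⟨h0, fun v w hv hw he => ?_⟩
  have hls := h v w hv hw he
  rcases lexD hls with hpre | ⟨c, a, b, l', t', he1, he2, hab⟩
  · exfalso
    have := hpre.length_le
    subst he
    simp only [List.length_append] at this
    have := List.length_pos_iff.mpr hv
    omega
  · rw [he1, he2]
    have := List.Lex.append_left (· < ·)
      (List.Lex.rel hab : List.Lex (· < ·) (a :: l') (b :: (t' ++ v))) c
    simpa using this

theorem lex_append_self {x y : List α} (hy : Lyn y) (hx : x ≠ []) (h : List.Lex (· < ·) x y) :
    List.Lex (· < ·) (x ++ y) y := by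
  rcases lexD h with hpre | ⟨c, a, b, x', y', rfl, rfl, hab⟩
  · obtain ⟨t, rfl⟩ := hpre
    have ht : t ≠ [] := by
      rintro rfl
      rw [List.append_nil] at h
      exact lex_irrefl _ h
    exact List.Lex.append_left _ (lyn_suffix hy hx ht rfl) x
  · have := List.Lex.append_left (· < ·)
      (List.Lex.rel hab : List.Lex (· < ·) (a :: (x' ++ (c ++ b :: y'))) (b :: y')) c
    simpa using this

theorem lyn_mul {x y : List α} (hx : Lyn x) (hy : Lyn y) (hxy : List.Lex (· < ·) x y) :
    Lyn (x ++ y) := by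
  have hxne := hx.1
  have hyne := hy.1
  have hXY : List.Lex (· < ·) (x ++ y) y := lex_append_self hy hxne hxy
  refine lyn_of_suffix (by simp [hxne]) ?_
  rintro v s hv hs he
  rcases List.append_eq_append_iff.mp he.symm with ⟨a', hx2, hs2⟩ | ⟨c', hv2, hy2⟩
  · rcases eq_or_ne a' [] with rfl | ha
    · rw [hs2, List.nil_append]
      exact hXY
    · have hlex := lyn_suffix hx hv ha hx2
      rcases lexD hlex with hpre | ⟨c, a, b, x', t', he1, he2, hab⟩
      · exfalso
        have h5 := hpre.length_le
        have h6 := congrArg List.length hx2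
        simp only [List.length_append] at h6
        have := List.length_pos_iff.mpr hv
        omega
      · rw [hs2, he1, he2]
        have := List.Lex.append_left (· < ·)
          (List.Lex.rel hab : List.Lex (· < ·) (a :: (x' ++ y)) (b :: (t' ++ y))) c
        simpa using this
  · rcases eq_or_ne c' [] with rfl | hc
    · rw [List.nil_append] at hy2
      rw [← hy2]
      exact hXY
    · exact lex_trans hXY (lyn_suffix hy hc hs hy2)

theorem chain'_decomp {β : Type*} (Rr : β → β → Prop) :
    ∀ L : List β, ¬ L.Chain' Rr → ∃ A x y B, L = A ++ x :: y :: B ∧ ¬ Rr x y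
  | [], h => absurd List.isChain_nil h
  | [x], h => absurd (List.isChain_singleton x) h
  | x :: y :: t, h => by
    by_cases hxy : Rr x y
    · have h2 : ¬ (y :: t).Chain' Rr := fun hc => h (List.isChain_cons_cons.mpr ⟨hxy, hc⟩)
      obtain ⟨A, a, b, B, hAB, hab⟩ := chain'_decomp Rr (y :: t) h2
      exact ⟨x :: A, a, b, B, by rw [hAB, List.cons_append], hab⟩
    · exact ⟨[], x, y, t, rfl, hxy⟩

theorem cfl : ∀ (k : ℕ) (L : List (List α)), L.length ≤ k → L ≠ [] → (∀ w ∈ L, Lyn w) →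
    ∃ M : List (List α), M ≠ [] ∧ M.flatten = L.flatten ∧ (∀ w ∈ M, Lyn w) ∧
      M.Chain' (fun a b => List.Lex (· < ·) b a ∨ b = a) := by
  intro k
  induction k with
  | zero =>
    intro L hk hne _
    cases L with
    | nil => exact absurd rfl hne
    | cons a t => simp at hk
  | succ k ih =>
    intro L hk hne hlyn
    by_cases hc : L.Chain' (fun a b => List.Lex (· < ·) b a ∨ b = a)
    · exact ⟨L, hne, rfl, hlyn, hc⟩
    · obtain ⟨A, x, y, B, rfl, hxy⟩ := chain'_decomp _ L hc
      have hlt : List.Lex (· < ·) x y := by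
        rcases lt_trichotomy x y with h | h | h
        · exact h
        · exact absurd (Or.inr h.symm) hxy
        · exact absurd (Or.inl h) hxy
      have hxl : Lyn x := hlyn x (by simp)
      have hyl : Lyn y := hlyn y (by simp)
      obtain ⟨M, h1, h2, h3, h4⟩ := ih (A ++ (x ++ y) :: B)
        (by simp only [List.length_append, List.length_cons] at hk ⊢; omega)
        (by simp)
        (by
          intro w hw
          simp only [List.mem_append, List.mem_cons] at hw
          rcases hw with hw | hw | hw
          · exact hlyn w (by simp [hw])
          · exact hw ▸ lyn_mul hxl hyl hlt
          · exact hlyn w (by simp [hw]))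
      refine ⟨M, h1, ?_, h3, h4⟩
      rw [h2]
      simp [List.flatten_append]

end CFLAux

noncomputable section

/-- Lexicographic order on words over the ordered alphabet `x_1 < ⋯ < x_n`. -/
def wlt {n : ℕ} (u v : FreeMonoid (Fin n)) : Prop :=
  List.Lex (· < ·) (FreeMonoid.toList u) (FreeMonoid.toList v)

/-- Lyndon word: nonempty and smaller than every rotation `u₂u₁` coming from a
factorization `u = u₁u₂` into nonempty words. -/
def IsLyndon {n : ℕ} (u : FreeMonoid (Fin n)) : Prop :=
  u ≠ 1 ∧ ∀ v w : FreeMonoid (Fin n), v ≠ 1 → w ≠ 1 → u = v * w → wlt u (w * v)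

/-- `u` is standard w.r.t. the quotient `π : T → R`:  `π(u)` is not a linear
combination of images of strictly greater words of the same length. -/
def IsStandard (F : Type) [Field F] {n : ℕ} {R : Type} [Ring R] [Algebra F R]
    (π : MonoidAlgebra F (FreeMonoid (Fin n)) →ₐ[F] R) (u : FreeMonoid (Fin n)) : Prop :=
  π (wordOf F u) ∉ Submodule.span F
    { y : R | ∃ w : FreeMonoid (Fin n),
        FreeMonoid.length w = FreeMonoid.length u ∧ wlt u w ∧ y = π (wordOf F w) }

/-- The kernel of `π` (i.e. the ideal `I`) is homogeneous w.r.t. the length grading: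
it contains each length-homogeneous component of each of its elements. -/
def HomogKer (F : Type) [Field F] {n : ℕ} {R : Type} [Ring R] [Algebra F R]
    (π : MonoidAlgebra F (FreeMonoid (Fin n)) →ₐ[F] R) : Prop :=
  ∀ x : MonoidAlgebra F (FreeMonoid (Fin n)), π x = 0 →
    ∀ d : ℕ, π (MonoidAlgebra.ofCoeff (Finsupp.filter (fun w : FreeMonoid (Fin n) => FreeMonoid.length w = d) x.coeff)) = 0

namespace CFLAux

theorem ne_one_of_toList {α : Type*} {x : FreeMonoid α} (h : FreeMonoid.toList x ≠ []) :
    x ≠ 1 := fun hh => h (by rw [hh]; rfl)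

theorem toList_ne_nil {α : Type*} {x : FreeMonoid α} (h : x ≠ 1) :
    FreeMonoid.toList x ≠ [] := fun hh => h (FreeMonoid.toList.injective hh)

theorem isLyndon_of_lyn {n : ℕ} {m : List (Fin n)} (h : CFLAux.Lyn m) :
    IsLyndon (FreeMonoid.ofList m) := by
  constructor
  · intro h1
    exact h.1 (congrArg FreeMonoid.toList h1)
  · intro v w hv hw he
    have he' : m = FreeMonoid.toList v ++ FreeMonoid.toList w := by
      have := congrArg FreeMonoid.toList he
      simpa [FreeMonoid.toList_mul, FreeMonoid.toList_ofList] using this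
    have hres := h.2 _ _ (toList_ne_nil hv) (toList_ne_nil hw) he'
    show List.Lex (· < ·) (FreeMonoid.toList (FreeMonoid.ofList m))
      (FreeMonoid.toList (w * v))
    simpa [FreeMonoid.toList_mul, FreeMonoid.toList_ofList] using hres

theorem prod_map_ofList {α : Type*} (M : List (List α)) :
    (M.map FreeMonoid.ofList).prod = FreeMonoid.ofList M.flatten := by
  induction M with
  | nil => rfl
  | cons a t ih =>
    rw [List.map_cons, List.prod_cons, List.flatten_cons, FreeMonoid.ofList_append, ih]

theorem flatten_map_singleton {α : Type*} (l : List α) :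
    (l.map (fun a => [a])).flatten = l := by
  induction l with
  | nil => rfl
  | cons a t ih => simp [ih]

theorem std_factor {F : Type} [Field F] {n : ℕ} {R : Type} [Ring R] [Algebra F R]
    (π : MonoidAlgebra F (FreeMonoid (Fin n)) →ₐ[F] R) (a x b : FreeMonoid (Fin n))
    (h : IsStandard F π (a * x * b)) : IsStandard F π x := by
  intro hx
  apply h
  set f : R →ₗ[F] R :=
    (LinearMap.mulLeft F (π (wordOf F a))).comp (LinearMap.mulRight F (π (wordOf F b))) with hf
  have hfy : ∀ y : R, f y = π (wordOf F a) * (y * π (wordOf F b)) := fun y => rfl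
  have hword : ∀ p q : FreeMonoid (Fin n), wordOf F (p * q) = wordOf F p * wordOf F q :=
    fun p q => map_mul (MonoidAlgebra.of F (FreeMonoid (Fin n))) p q
  have heq : π (wordOf F (a * x * b)) = f (π (wordOf F x)) := by
    rw [hfy, hword, hword, map_mul, map_mul, mul_assoc]
  rw [heq]
  have himg : f (π (wordOf F x)) ∈ Submodule.map f (Submodule.span F
      { y : R | ∃ w : FreeMonoid (Fin n),
        FreeMonoid.length w = FreeMonoid.length x ∧ wlt x w ∧ y = π (wordOf F w) }) :=
    Submodule.mem_map_of_mem hx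
  rw [Submodule.map_span] at himg
  refine Submodule.span_mono ?_ himg
  rintro y ⟨y', ⟨w, hlen, hlex, rfl⟩, rfl⟩
  refine ⟨a * w * b, ?_, ?_, ?_⟩
  · simp only [FreeMonoid.length_mul, hlen]
  · show List.Lex (· < ·) (FreeMonoid.toList (a * x * b)) (FreeMonoid.toList (a * w * b))
    have hlex' : List.Lex (· < ·) (FreeMonoid.toList x) (FreeMonoid.toList w) := hlex
    have hlen' : (FreeMonoid.toList x).length = (FreeMonoid.toList w).length := hlen.symm
    have := List.Lex.append_left (· < ·)
      (lexA _ _ hlen' hlex' (FreeMonoid.toList b) (FreeMonoid.toList b))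
      (FreeMonoid.toList a)
    simpa [FreeMonoid.toList_mul, List.append_assoc] using this
  · rw [hfy, hword, hword, map_mul, map_mul, mul_assoc]

end CFLAux

/-- every nonempty standard word is a non-increasing product of
standard Lyndon words. -/
theorem stmt_8 (F : Type) [Field F] [CharZero F] (n : ℕ) (hn : 1 ≤ n)
    (R : Type) [Ring R] [Algebra F R]
    (π : MonoidAlgebra F (FreeMonoid (Fin n)) →ₐ[F] R)
    (hπ : Function.Surjective π) (hI : HomogKer F π)
    (u : FreeMonoid (Fin n)) (hune : u ≠ 1) (hu : IsStandard F π u) :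
    ∃ L : List (FreeMonoid (Fin n)), L ≠ [] ∧ L.prod = u ∧
      (∀ w ∈ L, IsLyndon w ∧ IsStandard F π w) ∧
      L.Chain' (fun x y => wlt y x ∨ y = x) := by
  classical
  have hune' : FreeMonoid.toList u ≠ [] := CFLAux.toList_ne_nil hune
  obtain ⟨M, hMne, hMflat, hMlyn, hMchain⟩ :=
    CFLAux.cfl ((FreeMonoid.toList u).map (fun a => [a])).length
      ((FreeMonoid.toList u).map (fun a => [a])) le_rfl
      (by simpa using hune')
      (by
        intro w hw
        simp only [List.mem_map] at hw
        obtain ⟨a, _, rfl⟩ := hw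
        exact CFLAux.lyn_singleton a)
  have hflat : M.flatten = FreeMonoid.toList u := by
    rw [hMflat, CFLAux.flatten_map_singleton]
  refine ⟨M.map FreeMonoid.ofList, by simpa using hMne, ?_, ?_, ?_⟩
  · rw [CFLAux.prod_map_ofList, hflat, FreeMonoid.ofList_toList]
  · intro w hw
    simp only [List.mem_map] at hw
    obtain ⟨m, hm, rfl⟩ := hw
    refine ⟨CFLAux.isLyndon_of_lyn (hMlyn m hm), ?_⟩
    obtain ⟨s, t, rfl⟩ := List.append_of_mem hm
    have hu' : u = ((s.map FreeMonoid.ofList).prod) * FreeMonoid.ofList m *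
        ((t.map FreeMonoid.ofList).prod) := by
      have : u = ((s ++ m :: t).map FreeMonoid.ofList).prod := by
        rw [CFLAux.prod_map_ofList, hflat, FreeMonoid.ofList_toList]
      rw [this]
      simp [List.prod_append, mul_assoc]
    exact CFLAux.std_factor π _ _ _ (hu' ▸ hu)
  · unfold List.Chain' at hMchain ⊢
    rw [List.isChain_map]
    refine hMchain.imp ?_
    intro a b hab
    rcases hab with h | h
    · exact Or.inl h
    · exact Or.inr (congrArg FreeMonoid.ofList h)

end
end

section
/- For every Lyndon word l, in the free algebra T one has [l]⁻ = (−1)^{|l|−1}·l + Σ_w a_w·w, where the sum runs over words w with |w| = |l| and w > l and the a_w are scalars in F. -/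
noncomputable section

/-- `(v, w)` is the Shirshov decomposition of `u`: both factors are Lyndon,
`u = v·w`, and `v` has minimal length among all such factorizations. -/
def IsShirshov {n : ℕ} (u v w : FreeMonoid (Fin n)) : Prop :=
  IsLyndon v ∧ IsLyndon w ∧ u = v * w ∧
    ∀ v' w' : FreeMonoid (Fin n), IsLyndon v' → IsLyndon w' → u = v' * w' →
      FreeMonoid.length v ≤ FreeMonoid.length v'

/-- The bicharacter `χ` determined by `χ(e_k, e_l) = q_{kl}`. -/
def chiF (F : Type) [Field F] {n : ℕ} (q : Fin n → Fin n → F) (d e : Fin n → ℕ) : F :=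
  ∏ k : Fin n, ∏ l : Fin n, q k l ^ (d k * e l)


section Aux
open List

section Lists
variable {α : Type*} [LinearOrder α]

lemma lex_parts {c a' b' : List α} {x y : α} (h : x < y) :
    List.Lex (·<·) (c ++ x :: a') (c ++ y :: b') := by
  induction c with
  | nil => exact List.Lex.rel h
  | cons hd tl ih => exact List.Lex.cons ih

lemma lex_cases {a b : List α} (h : List.Lex (·<·) a b) :
    a <+: b ∨ ∃ c a' b' x y, x < y ∧ a = c ++ x :: a' ∧ b = c ++ y :: b' := by
  induction h with
  | nil => exact Or.inl (List.nil_prefix)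
  | @rel x l₁ y l₂ h => exact Or.inr ⟨[], l₁, l₂, x, y, h, rfl, rfl⟩
  | @cons a l₁ l₂ h ih =>
    rcases ih with h1 | ⟨c, a', b', u, v, huv, ha, hb⟩
    · exact Or.inl (List.cons_prefix_cons.mpr ⟨rfl, h1⟩)
    · exact Or.inr ⟨a :: c, a', b', u, v, huv, by simp [ha], by simp [hb]⟩

lemma lex_append_both {a c : List α} (b d : List α) (hlen : a.length = c.length)
    (h : List.Lex (·<·) a c) : List.Lex (·<·) (a ++ b) (c ++ d) := by
  rcases lex_cases h with h1 | ⟨e, a', c', x, y, hxy, ha, hc⟩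
  · rcases h1 with ⟨t, rfl⟩
    have : t = [] := by
      have := hlen; simp at this; simpa using this.symm
    subst this
    simp at h
  · subst ha; subst hc
    simpa using lex_parts (c := e) (a' := a' ++ b) (b' := c' ++ d) hxy

lemma lex_cancel_left {a b d : List α} (h : List.Lex (·<·) (a ++ b) (a ++ d)) :
    List.Lex (·<·) b d := by
  induction a with
  | nil => simpa using h
  | cons hd tl ih =>
    simp only [List.cons_append] at h
    exact ih (List.lex_cons_iff.mp h)

lemma split_mid {a b c d : List α} {x : α} (h : a ++ b = c ++ x :: d)
    (hlt : c.length < a.length) : ∃ a₁, a = c ++ x :: a₁ ∧ d = a₁ ++ b := by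
  have hc : c <+: a := by
    refine List.prefix_of_prefix_length_le ⟨x :: d, h.symm⟩ (List.prefix_append a b) hlt.le
  rcases hc with ⟨a₂, rfl⟩
  have hne : a₂ ≠ [] := by
    intro he; subst he; simp at hlt
  rcases List.exists_cons_of_ne_nil hne with ⟨y, a₁, rfl⟩
  rw [List.append_assoc] at h
  have h2 := List.append_cancel_left h
  simp only [List.cons_append] at h2
  obtain ⟨rfl, rfl⟩ : y = x ∧ a₁ ++ b = d := by
    constructor
    · exact (List.cons.injEq _ _ _ _ ▸ h2).1
    · exact (List.cons.injEq _ _ _ _ ▸ h2).2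
  exact ⟨a₁, rfl, rfl⟩

lemma exists_lex_min (L : List (List α)) (h : L ≠ []) :
    ∃ m ∈ L, ∀ x ∈ L, ¬ List.Lex (·<·) x m := by
  induction L with
  | nil => exact absurd rfl h
  | cons a tl ih =>
    rcases eq_or_ne tl [] with rfl | htl
    · exact ⟨a, by simp, by simp⟩
    · rcases ih htl with ⟨m, hm, hmin⟩
      by_cases hca : List.Lex (·<·) a m
      · refine ⟨a, by simp, ?_⟩
        intro x hx hxa
        rcases List.mem_cons.mp hx with rfl | hx
        · exact irrefl_of _ x hxa
        · exact hmin x hx (List.lex_trans lt_trans hxa hca)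
      · refine ⟨m, by simp [hm], ?_⟩
        intro x hx hxm
        rcases List.mem_cons.mp hx with rfl | hx
        · exact hca hxm
        · exact hmin x hx hxm

end Lists
section Lyndon
variable {α : Type*} [LinearOrder α]

lemma lex_trichotomy (l s : List α) :
    List.Lex (·<·) l s ∨ l = s ∨ List.Lex (·<·) s l := trichotomous_of _ l s

lemma lex_asymm' {l s : List α} (h1 : List.Lex (·<·) l s) (h2 : List.Lex (·<·) s l) : False :=
  asymm_of (List.Lex (·<·)) h1 h2

lemma lex_trans' {a b c : List α} (h1 : List.Lex (·<·) a b) (h2 : List.Lex (·<·) b c) :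
    List.Lex (·<·) a c := List.lex_trans lt_trans h1 h2

def LynL (l : List α) : Prop :=
  l ≠ [] ∧ ∀ p s : List α, p ≠ [] → s ≠ [] → l = p ++ s → List.Lex (·<·) l (s ++ p)

lemma LynL.lt_suffix {l p s : List α} (h : LynL l) (hp : p ≠ []) (hs : s ≠ [])
    (he : l = p ++ s) : List.Lex (·<·) l s := by
  have hrot : List.Lex (·<·) l (s ++ p) := h.2 p s hp hs he
  rcases lex_trichotomy l s with hlt | heq | hgt
  · exact hlt
  · exfalso
    have h0 : l.length = s.length := by rw [heq]
    rw [he] at h0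
    simp only [List.length_append] at h0
    have : p.length = 0 := by omega
    exact hp (List.length_eq_zero_iff.mp this)
  · exfalso
    rcases lex_cases hgt with hpre | ⟨c, a', b', x, y, hxy, hsd, hld⟩
    · rcases hpre with ⟨t, rfl⟩
      have ht : t ≠ [] := by
        intro h0; subst h0
        have h3 := congrArg List.length he
        simp only [List.length_append, List.length_nil] at h3
        have : p.length = 0 := by omega
        exact hp (List.length_eq_zero_iff.mp this)
      have h1 : List.Lex (·<·) t p := lex_cancel_left hrot
      have hlen : t.length = p.length := by
        have h1 := congrArg List.length he
        simp only [List.length_take, List.length_drop, List.length_append] at h1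
        omega
      have h2 : List.Lex (·<·) (t ++ s) (p ++ s) := lex_append_both _ _ hlen h1
      rw [← he] at h2
      have hrot2 : List.Lex (·<·) (s ++ t) (t ++ s) := h.2 s t hs ht rfl
      exact lex_asymm' hrot2 h2
    · have h2 : List.Lex (·<·) (s ++ p) l := by
        rw [hsd, hld, List.append_assoc, List.cons_append]
        exact lex_parts hxy
      exact lex_asymm' hrot h2

lemma lynL_of_suffix {l : List α} (hne : l ≠ [])
    (h : ∀ p s : List α, p ≠ [] → s ≠ [] → l = p ++ s → List.Lex (·<·) l s) : LynL l := by
  refine ⟨hne, fun p s hp hs he => ?_⟩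
  have h1 : List.Lex (·<·) l s := h p s hp hs he
  rcases lex_cases h1 with hpre | ⟨c, a', b', x, y, hxy, hld, hsd⟩
  · exfalso
    have h2 := hpre.length_le
    have h3 := congrArg List.length he
    simp at h3
    have h4 : p.length = 0 := by omega
    exact hp (List.length_eq_zero_iff.mp h4)
  · rw [hld, hsd, List.append_assoc, List.cons_append]
    exact lex_parts hxy

lemma lynL_factor {l : List α} (h : LynL l) (h2 : 2 ≤ l.length) :
    ∃ v w : List α, v ≠ [] ∧ w ≠ [] ∧ LynL v ∧ LynL w ∧ l = v ++ w := by
  classical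
  set L := (List.range' 1 (l.length - 1)).map (fun i => l.drop i) with hL
  have hLne : L ≠ [] := by
    intro h0
    have := congrArg List.length h0
    simp [hL] at this
    omega
  obtain ⟨m, hmL, hmin⟩ := exists_lex_min L hLne
  rw [hL, List.mem_map] at hmL
  obtain ⟨i₀, hi₀, hmdef⟩ := hmL
  rw [List.mem_range'_1] at hi₀
  have hi₀1 : 1 ≤ i₀ := hi₀.1
  have hi₀2 : i₀ < l.length := by omega
  have hminD : ∀ j, 1 ≤ j → j < l.length → ¬ List.Lex (·<·) (l.drop j) (l.drop i₀) := by
    intro j hj1 hj2 hcon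
    rw [hmdef] at hcon
    exact hmin _ (by
      rw [hL, List.mem_map]
      exact ⟨j, by rw [List.mem_range'_1]; omega, rfl⟩) hcon
  refine ⟨l.take i₀, l.drop i₀, ?_, ?_, ?_, ?_, (List.take_append_drop i₀ l).symm⟩
  · intro h0
    have h1 := congrArg List.length h0
    simp only [List.length_take, List.length_drop, List.length_nil] at h1
    omega
  · intro h0
    have h1 := congrArg List.length h0
    simp only [List.length_take, List.length_drop, List.length_nil] at h1
    omega
  · -- v := take i₀ l is Lyndon
    refine lynL_of_suffix ?_ ?_
    · intro h0
      have h1 := congrArg List.length h0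
      simp only [List.length_take, List.length_drop, List.length_nil] at h1
      omega
    · intro p s hp hs he
      have hplen : 0 < p.length := List.length_pos_iff.mpr hp
      have hslen : 0 < s.length := List.length_pos_iff.mpr hs
      have hjlen : p.length + s.length = i₀ := by
        have h1 := congrArg List.length he
        simp only [List.length_take, List.length_drop, List.length_append] at h1
        omega
      have hdp : l.drop p.length = s ++ l.drop i₀ := by
        conv_lhs => rw [← List.take_append_drop i₀ l]
        rw [List.drop_append_of_le_length (by simp; omega), he, List.drop_left]
      have hlex : List.Lex (·<·) l (s ++ l.drop i₀) := by
        rw [← hdp]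
        refine LynL.lt_suffix h (p := l.take p.length) ?_ ?_ (List.take_append_drop _ l).symm
        · intro h0
          have h1 := congrArg List.length h0
          simp only [List.length_take, List.length_drop, List.length_nil] at h1
          omega
        · intro h0
          have h1 := congrArg List.length h0
          simp only [List.length_take, List.length_drop, List.length_nil] at h1
          omega
      rcases lex_cases hlex with hpre | ⟨c, a', b', x, y, hxy, hld, hsd⟩
      · exfalso
        have h3 := hpre.length_le
        simp at h3
        omega
      · by_cases hcs : c.length < s.length
        · obtain ⟨s₁, hs1, -⟩ := split_mid (a := s) (b := l.drop i₀) hsd hcs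
          have hcv : c.length < (l.take i₀).length := by simp; omega
          obtain ⟨v₁, hv1, -⟩ := split_mid (a := l.take i₀) (b := l.drop i₀)
            (by rw [List.take_append_drop]; exact hld) hcv
          rw [hv1, hs1]
          exact lex_parts hxy
        · exfalso
          push_neg at hcs
          have hspre : s <+: c :=
            List.prefix_of_prefix_length_le ⟨l.drop i₀, rfl⟩ ⟨y :: b', hsd.symm⟩ hcs
          rcases hspre with ⟨c', rfl⟩
          have hw : l.drop i₀ = c' ++ y :: b' := by
            rw [List.append_assoc] at hsd
            exact List.append_cancel_left hsd
          have hrho : l.drop s.length = c' ++ x :: a' := by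
            rw [hld, List.append_assoc, List.drop_left]
          have hcon : List.Lex (·<·) (l.drop s.length) (l.drop i₀) := by
            rw [hrho, hw]; exact lex_parts hxy
          exact hminD s.length (by omega) (by omega) hcon
  · -- w := drop i₀ l is Lyndon
    refine lynL_of_suffix ?_ ?_
    · intro h0
      have h1 := congrArg List.length h0
      simp only [List.length_take, List.length_drop, List.length_nil] at h1
      omega
    · intro p s hp hs he
      have hplen : 0 < p.length := List.length_pos_iff.mpr hp
      have hslen : 0 < s.length := List.length_pos_iff.mpr hs
      have hlen : p.length + s.length = l.length - i₀ := by
        have h1 := congrArg List.length he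
        simp only [List.length_take, List.length_drop, List.length_append] at h1
        omega
      have hsdrop : l.drop (i₀ + p.length) = s := by
        rw [← List.drop_drop, he, List.drop_left]
      have hne2 : s ≠ l.drop i₀ := by
        intro h0
        have h1 := congrArg List.length h0
        simp only [List.length_drop] at h1
        omega
      have hnlt : ¬ List.Lex (·<·) s (l.drop i₀) := by
        rw [← hsdrop]
        exact hminD (i₀ + p.length) (by omega) (by omega)
      rcases lex_trichotomy (l.drop i₀) s with hlt | heq | hgt
      · exact hlt
      · exact absurd heq.symm hne2
      · exact absurd hgt hnlt

end Lyndon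
section Bridge
variable {n : ℕ}

lemma toList_eq_nil_iff' (u : FreeMonoid (Fin n)) : FreeMonoid.toList u = [] ↔ u = 1 := by
  constructor
  · intro h
    apply FreeMonoid.toList.injective
    rw [h, FreeMonoid.toList_one]
  · rintro rfl
    exact FreeMonoid.toList_one

lemma isLyndon_iff (u : FreeMonoid (Fin n)) : IsLyndon u ↔ LynL (FreeMonoid.toList u) := by
  constructor
  · rintro ⟨h1, h2⟩
    refine ⟨fun h0 => h1 ((toList_eq_nil_iff' u).mp h0), ?_⟩
    intro p s hp hs he
    have h3 := h2 (FreeMonoid.ofList p) (FreeMonoid.ofList s) ?_ ?_ ?_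
    · simpa [wlt, FreeMonoid.toList_mul, FreeMonoid.toList_ofList] using h3
    · intro h0
      apply hp
      have h4 := congrArg FreeMonoid.toList h0
      simpa [FreeMonoid.toList_ofList, FreeMonoid.toList_one] using h4
    · intro h0
      apply hs
      have h4 := congrArg FreeMonoid.toList h0
      simpa [FreeMonoid.toList_ofList, FreeMonoid.toList_one] using h4
    · apply FreeMonoid.toList.injective
      simp [FreeMonoid.toList_mul, FreeMonoid.toList_ofList, he]
  · rintro ⟨h1, h2⟩
    refine ⟨fun h0 => h1 (by rw [h0, FreeMonoid.toList_one]), ?_⟩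
    intro v w hv hw he
    have h3 := h2 (FreeMonoid.toList v) (FreeMonoid.toList w)
      (fun h0 => hv ((toList_eq_nil_iff' v).mp h0))
      (fun h0 => hw ((toList_eq_nil_iff' w).mp h0))
      (by rw [he, FreeMonoid.toList_mul])
    simpa [wlt, FreeMonoid.toList_mul] using h3

lemma exists_shirshov {u : FreeMonoid (Fin n)} (h : IsLyndon u) (h2 : 2 ≤ FreeMonoid.length u) :
    ∃ v w : FreeMonoid (Fin n), IsShirshov u v w := by
  classical
  have hQ : ∃ k : ℕ, ∃ v w : FreeMonoid (Fin n),
      IsLyndon v ∧ IsLyndon w ∧ u = v * w ∧ FreeMonoid.length v = k := by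
    obtain ⟨v, w, hvne, hwne, hv, hw, he⟩ := lynL_factor ((isLyndon_iff u).mp h) h2
    refine ⟨(FreeMonoid.ofList v).length, FreeMonoid.ofList v, FreeMonoid.ofList w, ?_, ?_, ?_, rfl⟩
    · rw [isLyndon_iff]
      simpa [FreeMonoid.toList_ofList] using hv
    · rw [isLyndon_iff]
      simpa [FreeMonoid.toList_ofList] using hw
    · apply FreeMonoid.toList.injective
      simpa [FreeMonoid.toList_mul, FreeMonoid.toList_ofList] using he
  obtain ⟨v, w, hv, hw, he, hk⟩ := Nat.find_spec hQ
  refine ⟨v, w, hv, hw, he, ?_⟩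
  intro v' w' hv' hw' he'
  rw [hk]
  exact Nat.find_min' hQ ⟨v', w', hv', hw', he', rfl⟩

end Bridge

lemma mul_words_mem_span (F : Type) [Field F] {n : ℕ}
    {s t TGT : Set (FreeMonoid (Fin n))}
    (h : ∀ a ∈ s, ∀ b ∈ t, a * b ∈ TGT)
    {p q : MonoidAlgebra F (FreeMonoid (Fin n))}
    (hp : p ∈ Submodule.span F (wordOf F '' s)) (hq : q ∈ Submodule.span F (wordOf F '' t)) :
    p * q ∈ Submodule.span F (wordOf F '' TGT) := by
  have h1 := Submodule.mul_mem_mul hp hq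
  rw [Submodule.span_mul_span] at h1
  refine Submodule.span_mono ?_ h1
  rintro y hy
  rw [Set.mem_mul] at hy
  obtain ⟨y1, hy1, y2, hy2, rfl⟩ := hy
  obtain ⟨a, ha, rfl⟩ := hy1
  obtain ⟨b, hb, rfl⟩ := hy2
  exact ⟨a * b, h a ha b hb, map_mul (MonoidAlgebra.of F (FreeMonoid (Fin n))) a b⟩

lemma word_mem_word_span (F : Type) [Field F] {n : ℕ} (w : FreeMonoid (Fin n)) :
    wordOf F w ∈ Submodule.span F (wordOf F '' ({w} : Set (FreeMonoid (Fin n)))) :=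
  Submodule.subset_span ⟨w, rfl, rfl⟩

lemma length_pos_of_ne_one {n : ℕ} {u : FreeMonoid (Fin n)} (h : u ≠ 1) :
    1 ≤ FreeMonoid.length u := by
  rcases Nat.eq_zero_or_pos (FreeMonoid.length u) with h0 | h0
  · exact absurd ((toList_eq_nil_iff' u).mp (List.length_eq_zero_iff.mp h0)) h
  · exact h0

end Aux

/-- for any Lyndon word `l`, in the free algebra one has
`[l]⁻ = (−1)^{|l|−1}·l + (linear combination of greater words of the same length)`,
where `[·]⁻` is defined by `[x_k]⁻ = x_k` and `[u]⁻ = [w]⁻[v]⁻ − [v]⁻[w]⁻` on the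
Shirshov decomposition `u = v·w`. -/
theorem stmt_9 (F : Type) [Field F] [CharZero F] (n : ℕ) (hn : 1 ≤ n)
    (brm : FreeMonoid (Fin n) → MonoidAlgebra F (FreeMonoid (Fin n)))
    (hbrm1 : ∀ k : Fin n, brm (FreeMonoid.of k) = wordOf F (FreeMonoid.of k))
    (hbrm2 : ∀ u v w : FreeMonoid (Fin n), IsLyndon u → 2 ≤ FreeMonoid.length u →
      IsShirshov u v w → brm u = brm w * brm v - brm v * brm w)
    (l : FreeMonoid (Fin n)) (hl : IsLyndon l) :
    brm l - ((-1 : F) ^ (FreeMonoid.length l - 1)) • wordOf F l ∈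
      Submodule.span F
        { y : MonoidAlgebra F (FreeMonoid (Fin n)) | ∃ w : FreeMonoid (Fin n),
            FreeMonoid.length w = FreeMonoid.length l ∧ wlt l w ∧ y = wordOf F w } := by
  classical
  suffices H : ∀ N : ℕ, ∀ l : FreeMonoid (Fin n), IsLyndon l → FreeMonoid.length l ≤ N →
      brm l - ((-1 : F) ^ (FreeMonoid.length l - 1)) • wordOf F l ∈
        Submodule.span F
          { y : MonoidAlgebra F (FreeMonoid (Fin n)) | ∃ w : FreeMonoid (Fin n),
              FreeMonoid.length w = FreeMonoid.length l ∧ wlt l w ∧ y = wordOf F w } by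
    exact H (FreeMonoid.length l) l hl le_rfl
  have hS : ∀ t : FreeMonoid (Fin n),
      { y : MonoidAlgebra F (FreeMonoid (Fin n)) | ∃ w : FreeMonoid (Fin n),
          FreeMonoid.length w = FreeMonoid.length t ∧ wlt t w ∧ y = wordOf F w }
        = wordOf F ''
          {w : FreeMonoid (Fin n) | FreeMonoid.length w = FreeMonoid.length t ∧ wlt t w} := by
    intro t
    ext y
    constructor
    · rintro ⟨w', h1, h2, rfl⟩
      exact ⟨w', ⟨h1, h2⟩, rfl⟩
    · rintro ⟨w', ⟨h1, h2⟩, rfl⟩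
      exact ⟨w', h1, h2, rfl⟩
  intro N
  induction N with
  | zero =>
    intro l hl hlen
    exact absurd ((toList_eq_nil_iff' l).mp (List.length_eq_zero_iff.mp (Nat.le_zero.mp hlen))) hl.1
  | succ N ih =>
    intro l hl hlen
    by_cases hN1 : FreeMonoid.length l = 1
    · obtain ⟨k, hk⟩ := List.length_eq_one_iff.mp hN1
      have hlk : l = FreeMonoid.of k := by
        apply FreeMonoid.toList.injective
        rw [FreeMonoid.toList_of]
        exact hk
      rw [hlk, hbrm1 k, FreeMonoid.length_of]
      simp
    · have h1l : 1 ≤ FreeMonoid.length l := length_pos_of_ne_one hl.1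
      have h2 : 2 ≤ FreeMonoid.length l := by omega
      obtain ⟨v, w, hsh⟩ := exists_shirshov hl h2
      obtain ⟨hv, hw, he, hmin⟩ := hsh
      have hbrml := hbrm2 l v w hl h2 ⟨hv, hw, he, hmin⟩
      have h1v : 1 ≤ FreeMonoid.length v := length_pos_of_ne_one hv.1
      have h1w : 1 ≤ FreeMonoid.length w := length_pos_of_ne_one hw.1
      have hadd : FreeMonoid.length l = FreeMonoid.length v + FreeMonoid.length w := by
        rw [he]; exact FreeMonoid.length_mul v w
      have IHv := ih v hv (by omega)
      have IHw := ih w hw (by omega)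
      rw [hS v] at IHv
      rw [hS w] at IHw
      rw [hS l]
      have hlw : wlt l w := by
        refine LynL.lt_suffix ((isLyndon_iff l).mp hl) (p := FreeMonoid.toList v) ?_ ?_ ?_
        · exact fun h0 => hv.1 ((toList_eq_nil_iff' v).mp h0)
        · exact fun h0 => hw.1 ((toList_eq_nil_iff' w).mp h0)
        · rw [he, FreeMonoid.toList_mul]
      set V := wordOf F v with hV
      set W := wordOf F w with hW
      set cv : F := (-1 : F) ^ (FreeMonoid.length v - 1) with hcv
      set cw : F := (-1 : F) ^ (FreeMonoid.length w - 1) with hcw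
      set pv := brm v - cv • V with hpv
      set pw := brm w - cw • W with hpw
      -- membership facts
      have hmemWV : wordOf F (w * v) ∈ Submodule.span F
          (wordOf F '' {x : FreeMonoid (Fin n) |
            FreeMonoid.length x = FreeMonoid.length l ∧ wlt l x}) := by
        apply Submodule.subset_span
        refine ⟨w * v, ⟨?_, hl.2 v w hv.1 hw.1 he⟩, rfl⟩
        rw [FreeMonoid.length_mul]; omega
      have m1 : W * pv ∈ Submodule.span F
          (wordOf F '' {x : FreeMonoid (Fin n) |
            FreeMonoid.length x = FreeMonoid.length l ∧ wlt l x}) := by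
        refine mul_words_mem_span F ?_ (word_mem_word_span F w) IHv
        rintro a (rfl : a = w) b ⟨hb1, hb2⟩
        refine ⟨by rw [FreeMonoid.length_mul]; omega, ?_⟩
        show List.Lex (·<·) (FreeMonoid.toList l) (FreeMonoid.toList (a * b))
        rw [FreeMonoid.toList_mul]
        exact List.Lex.append_right _ _ hlw
      have m2 : pw * V ∈ Submodule.span F
          (wordOf F '' {x : FreeMonoid (Fin n) |
            FreeMonoid.length x = FreeMonoid.length l ∧ wlt l x}) := by
        refine mul_words_mem_span F ?_ IHw (word_mem_word_span F v)
        rintro a ⟨ha1, ha2⟩ b (rfl : b = v)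
        refine ⟨by rw [FreeMonoid.length_mul]; omega, ?_⟩
        show List.Lex (·<·) (FreeMonoid.toList l) (FreeMonoid.toList (a * b))
        rw [FreeMonoid.toList_mul]
        exact List.Lex.append_right _ _ (lex_trans' hlw ha2)
      have m3 : pw * pv ∈ Submodule.span F
          (wordOf F '' {x : FreeMonoid (Fin n) |
            FreeMonoid.length x = FreeMonoid.length l ∧ wlt l x}) := by
        refine mul_words_mem_span F ?_ IHw IHv
        rintro a ⟨ha1, ha2⟩ b ⟨hb1, hb2⟩
        refine ⟨by rw [FreeMonoid.length_mul]; omega, ?_⟩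
        show List.Lex (·<·) (FreeMonoid.toList l) (FreeMonoid.toList (a * b))
        rw [FreeMonoid.toList_mul]
        exact List.Lex.append_right _ _ (lex_trans' hlw ha2)
      have m4 : V * pw ∈ Submodule.span F
          (wordOf F '' {x : FreeMonoid (Fin n) |
            FreeMonoid.length x = FreeMonoid.length l ∧ wlt l x}) := by
        refine mul_words_mem_span F ?_ (word_mem_word_span F v) IHw
        rintro a (rfl : a = v) b ⟨hb1, hb2⟩
        refine ⟨by rw [FreeMonoid.length_mul]; omega, ?_⟩
        show List.Lex (·<·) (FreeMonoid.toList l) (FreeMonoid.toList (a * b))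
        rw [FreeMonoid.toList_mul, he, FreeMonoid.toList_mul]
        exact List.Lex.append_left _ hb2 _
      have m5 : pv * W ∈ Submodule.span F
          (wordOf F '' {x : FreeMonoid (Fin n) |
            FreeMonoid.length x = FreeMonoid.length l ∧ wlt l x}) := by
        refine mul_words_mem_span F ?_ IHv (word_mem_word_span F w)
        rintro a ⟨ha1, ha2⟩ b (rfl : b = w)
        refine ⟨by rw [FreeMonoid.length_mul]; omega, ?_⟩
        show List.Lex (·<·) (FreeMonoid.toList l) (FreeMonoid.toList (a * b))
        rw [FreeMonoid.toList_mul, he, FreeMonoid.toList_mul]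
        exact lex_append_both _ _ ha1.symm ha2
      have m6 : pv * pw ∈ Submodule.span F
          (wordOf F '' {x : FreeMonoid (Fin n) |
            FreeMonoid.length x = FreeMonoid.length l ∧ wlt l x}) := by
        refine mul_words_mem_span F ?_ IHv IHw
        rintro a ⟨ha1, ha2⟩ b ⟨hb1, hb2⟩
        refine ⟨by rw [FreeMonoid.length_mul]; omega, ?_⟩
        show List.Lex (·<·) (FreeMonoid.toList l) (FreeMonoid.toList (a * b))
        rw [FreeMonoid.toList_mul, he, FreeMonoid.toList_mul]
        exact lex_append_both _ _ ha1.symm ha2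
      -- algebraic identity
      have hVW : V * W = wordOf F l := by
        rw [hV, hW, he]
        exact (map_mul (MonoidAlgebra.of F (FreeMonoid (Fin n))) v w).symm
      have hWV : W * V = wordOf F (w * v) :=
        (map_mul (MonoidAlgebra.of F (FreeMonoid (Fin n))) w v).symm
      have hcc : ((-1 : F) ^ (FreeMonoid.length l - 1)) = -(cv * cw) := by
        rw [hcv, hcw, ← pow_add]
        have h3 : FreeMonoid.length v - 1 + (FreeMonoid.length w - 1)
            = FreeMonoid.length l - 2 := by omega
        have h4 : FreeMonoid.length l - 1 = (FreeMonoid.length l - 2) + 1 := by omega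
        rw [h3, h4, pow_succ]
        ring
      have hbv : brm v = cv • V + pv := by rw [hpv]; abel
      have hbw : brm w = cw • W + pw := by rw [hpw]; abel
      have key : brm l - ((-1 : F) ^ (FreeMonoid.length l - 1)) • wordOf F l =
          (cw * cv) • wordOf F (w * v)
          + (cw • (W * pv) + cv • (pw * V) + pw * pv)
          - (cv • (V * pw) + cw • (pv * W) + pv * pw) := by
        rw [hbrml, hbv, hbw, hcc]
        simp only [add_mul, mul_add, smul_mul_assoc, mul_smul_comm, smul_smul, hVW, hWV,
          neg_smul, sub_neg_eq_add]
        module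
      rw [key]
      exact sub_mem
        (add_mem (Submodule.smul_mem _ _ hmemWV)
          (add_mem (add_mem (Submodule.smul_mem _ _ m1) (Submodule.smul_mem _ _ m2)) m3))
        (add_mem (add_mem (Submodule.smul_mem _ _ m4) (Submodule.smul_mem _ _ m5)) m6)

end
end

section
/- Every Lyndon word that is standard with respect to R is hard with respect to R. -/
noncomputable section

/-- A Lyndon word `u` is hard w.r.t. `π`: `π([u])` is not a linear combination of
elements `π([u₁]⋯[u_r])` with `r ≥ 1`, each `uᵢ` a Lyndon word with `uᵢ > u`, and
`|u₁| + ⋯ + |u_r| = |u|`. -/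
def IsHard (F : Type) [Field F] {n : ℕ} {R : Type} [Ring R] [Algebra F R]
    (π : MonoidAlgebra F (FreeMonoid (Fin n)) →ₐ[F] R)
    (br : FreeMonoid (Fin n) → MonoidAlgebra F (FreeMonoid (Fin n)))
    (u : FreeMonoid (Fin n)) : Prop :=
  π (br u) ∉ Submodule.span F
    { y : R | ∃ L : List (FreeMonoid (Fin n)), L ≠ [] ∧
        (∀ v ∈ L, IsLyndon v ∧ wlt u v) ∧
        (L.map FreeMonoid.length).sum = FreeMonoid.length u ∧
        y = π ((L.map br).prod) }

namespace Stmt11Aux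

/-! ### List lemmas about lexicographic order -/

section ListLex

variable {α : Type*} [LinearOrder α]

lemma lex8 : ∀ {a b : List α}, List.Lex (· < ·) a b →
    a <+: b ∨ ∀ s t : List α, List.Lex (· < ·) (a ++ s) (b ++ t) := by
  intro a b h
  induction h with
  | nil => exact Or.inl (List.nil_prefix)
  | @rel a l₁ b l₂ h => exact Or.inr fun s t => List.Lex.rel h
  | @cons a l₁ l₂ h ih =>
      rcases ih with hp | hall
      · exact Or.inl ((List.prefix_cons_inj a).mpr hp)
      · exact Or.inr fun s t => List.Lex.cons (hall s t)

lemma lex_cancel : ∀ (c : List α) {a b : List α},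
    List.Lex (· < ·) (c ++ a) (c ++ b) → List.Lex (· < ·) a b
  | [], _, _, h => h
  | x :: c, a, b, h => by
      cases h with
      | cons h => exact lex_cancel c h
      | rel h => exact absurd h (lt_irrefl x)

lemma lex_unappend : ∀ (p q s t : List α), List.Lex (· < ·) (p ++ s) (q ++ t) →
    List.Lex (· < ·) p q ∨ p <+: q ∨ q <+: p
  | [], q, _, _, _ => Or.inr (Or.inl (List.nil_prefix))
  | x :: p', [], _, _, _ => Or.inr (Or.inr (List.nil_prefix))
  | x :: p', y :: q', s, t, h => by
      cases h with
      | rel h => exact Or.inl (List.Lex.rel h)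
      | cons h =>
          rcases lex_unappend p' q' s t h with h1 | h2 | h3
          · exact Or.inl (List.Lex.cons h1)
          · exact Or.inr (Or.inl ((List.prefix_cons_inj _).mpr h2))
          · exact Or.inr (Or.inr ((List.prefix_cons_inj _).mpr h3))

lemma lex_append_all {a b : List α} (h : List.Lex (· < ·) a b)
    (hlen : b.length ≤ a.length) : ∀ s t : List α, List.Lex (· < ·) (a ++ s) (b ++ t) := by
  rcases lex8 h with hp | hall
  · have : a = b := hp.eq_of_length (le_antisymm hp.length_le hlen)
    subst this
    exact absurd h (irrefl a)
  · exact hall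

end ListLex

/-! ### Words -/

variable {n : ℕ}

local notation "tl" => FreeMonoid.toList

lemma word_ne_one_iff (u : FreeMonoid (Fin n)) : u ≠ 1 ↔ tl u ≠ [] := by
  constructor
  · intro h h'
    exact h (FreeMonoid.toList.injective (by rw [h', FreeMonoid.toList_one]))
  · intro h h'
    exact h (by rw [h', FreeMonoid.toList_one])

lemma len_pos_of_ne_one {u : FreeMonoid (Fin n)} (h : u ≠ 1) : 0 < FreeMonoid.length u := by
  have := (word_ne_one_iff u).mp h
  exact List.length_pos_iff.mpr this

lemma wlt_irrefl (u : FreeMonoid (Fin n)) : ¬ wlt u u := by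
  intro h
  have h' : List.Lex (· < ·) (FreeMonoid.toList u) (FreeMonoid.toList u) := h
  exact absurd h' (irrefl _)

lemma wlt_asymm {u v : FreeMonoid (Fin n)} (h : wlt u v) : ¬ wlt v u := fun h' =>
  asymm (r := List.Lex (· < ·) (α := Fin n)) h h'

lemma wlt_trans {u v w : FreeMonoid (Fin n)} (h1 : wlt u v) (h2 : wlt v w) : wlt u w :=
  @lt_trans (List (Fin n)) _ _ _ _ h1 h2

/-- Claim 1: a Lyndon word is lexicographically smaller than each of its proper
nonempty suffixes. -/
lemma lyndon_lt_suffix {u v w : FreeMonoid (Fin n)} (hu : IsLyndon u)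
    (hv : v ≠ 1) (hw : w ≠ 1) (huvw : u = v * w) : wlt u w := by
  have htu : tl u = tl v ++ tl w := by rw [huvw, FreeMonoid.toList_mul]
  have hvne : tl v ≠ [] := (word_ne_one_iff v).mp hv
  have hwne : tl w ≠ [] := (word_ne_one_iff w).mp hw
  rcases trichotomous_of (List.Lex (· < ·)) (tl u) (tl w) with h | h | h
  · exact h
  · exfalso
    have : (tl u).length = (tl v).length + (tl w).length := by rw [htu, List.length_append]
    have h2 : (tl u).length = (tl w).length := by rw [h]
    have := List.length_pos_iff.mpr hvne
    omega
  · -- h : Lex (tl w) (tl u)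
    exfalso
    have hlyn1 : wlt u (w * v) := hu.2 v w hv hw huvw
    have hlyn1' : List.Lex (· < ·) (tl u) (tl w ++ tl v) := by
      have := hlyn1; unfold wlt at this; rwa [FreeMonoid.toList_mul] at this
    rcases lex8 h with hp | hall
    · -- tl w is a prefix of tl u
      obtain ⟨t, ht⟩ := hp
      have htne : t ≠ [] := by
        intro h0
        rw [h0, List.append_nil] at ht
        have h1 : (tl u).length = (tl v).length + (tl w).length := by
          rw [htu, List.length_append]
        have h2 := congrArg List.length ht
        have h3 := List.length_pos_iff.mpr hvne
        omega
      have hut : u = w * FreeMonoid.ofList t := by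
        apply FreeMonoid.toList.injective
        rw [FreeMonoid.toList_mul, FreeMonoid.toList_ofList, ht]
      have htne1 : FreeMonoid.ofList t ≠ 1 := by
        rw [word_ne_one_iff, FreeMonoid.toList_ofList]; exact htne
      have hlyn2 : wlt u (FreeMonoid.ofList t * w) := hu.2 w (FreeMonoid.ofList t) hw htne1 hut
      have hlyn2' : List.Lex (· < ·) (tl u) (t ++ tl w) := by
        have := hlyn2; unfold wlt at this
        rwa [FreeMonoid.toList_mul, FreeMonoid.toList_ofList] at this
      -- from hlyn1' and ht : tl w ++ t = tl u, cancel to get Lex t (tl v)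
      have hcan : List.Lex (· < ·) t (tl v) := by
        apply lex_cancel (tl w)
        rw [ht]; exact hlyn1'
      have hlent : t.length = (tl v).length := by
        have h1 : (tl w).length + t.length = (tl u).length := by
          rw [← ht, List.length_append]
        have h2 : (tl u).length = (tl v).length + (tl w).length := by
          rw [htu, List.length_append]
        omega
      have := lex_append_all hcan (le_of_eq hlent.symm) (tl w) (tl w)
      rw [← htu] at this
      exact wlt_asymm (u := u) (v := FreeMonoid.ofList (t ++ tl w))
        (by unfold wlt; rwa [FreeMonoid.toList_ofList])
        (by unfold wlt; rwa [FreeMonoid.toList_ofList])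
    · have := hall (tl v) []
      rw [List.append_nil] at this
      exact absurd hlyn1' (asymm this)

/-- Claim 2: a nonempty word smaller than all of its proper nonempty suffixes is Lyndon. -/
lemma lyndon_of_lt_suffix {u : FreeMonoid (Fin n)} (hu1 : u ≠ 1)
    (h : ∀ v w : FreeMonoid (Fin n), v ≠ 1 → w ≠ 1 → u = v * w → wlt u w) : IsLyndon u := by
  refine ⟨hu1, fun v w hv hw huvw => ?_⟩
  have h1 : wlt u w := h v w hv hw huvw
  unfold wlt at h1 ⊢
  rw [FreeMonoid.toList_mul]
  exact List.Lex.append_right _ _ h1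

/-- every Lyndon word of length at least two factors into two Lyndon words -/
lemma exists_lyndon_factor {u : FreeMonoid (Fin n)} (hu : IsLyndon u)
    (h2 : 2 ≤ FreeMonoid.length u) :
    ∃ v w : FreeMonoid (Fin n), IsLyndon v ∧ IsLyndon w ∧ u = v * w := by
  classical
  set l : List (Fin n) := tl u with hl
  have hlen : l.length = FreeMonoid.length u := rfl
  set SS : Finset (List (Fin n)) := (Finset.Ioo 0 l.length).image (fun i => l.drop i) with hSS
  have hne : SS.Nonempty := ⟨l.drop 1, Finset.mem_image.mpr ⟨1, Finset.mem_Ioo.mpr ⟨one_pos, by omega⟩, rfl⟩⟩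
  set m : List (Fin n) := SS.min' hne with hm
  have hmem : m ∈ SS := SS.min'_mem hne
  obtain ⟨i₀, hi₀, hdrop⟩ := Finset.mem_image.mp hmem
  rw [Finset.mem_Ioo] at hi₀
  -- key minimality: no element of SS is lexicographically below m
  have hminkey : ∀ i, 0 < i → i < l.length → ¬ List.Lex (· < ·) (l.drop i) m := by
    intro i h0 h1 hlex
    have hmemi : l.drop i ∈ SS := Finset.mem_image.mpr ⟨i, Finset.mem_Ioo.mpr ⟨h0, h1⟩, rfl⟩
    have hle : m ≤ l.drop i := SS.min'_le _ hmemi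
    have hlt : l.drop i < m := hlex
    exact absurd (lt_of_lt_of_le hlt hle) (lt_irrefl _)
  set w : FreeMonoid (Fin n) := FreeMonoid.ofList m with hwdef
  set v : FreeMonoid (Fin n) := FreeMonoid.ofList (l.take i₀) with hvdef
  have htlw : tl w = m := FreeMonoid.toList_ofList m
  have htlv : tl v = l.take i₀ := FreeMonoid.toList_ofList _
  have hmlen : m.length = l.length - i₀ := by rw [← hdrop, List.length_drop]
  have huvw : u = v * w := by
    apply FreeMonoid.toList.injective
    rw [FreeMonoid.toList_mul, htlv, htlw, ← hdrop, List.take_append_drop]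
  have hvne : v ≠ 1 := by
    rw [word_ne_one_iff, htlv]
    intro h0
    have := congrArg List.length h0
    simp only [List.length_take, List.length_nil] at this
    omega
  have hwne : w ≠ 1 := by
    rw [word_ne_one_iff, htlw]
    intro h0
    have := congrArg List.length h0
    simp only [List.length_nil] at this
    omega
  -- w is Lyndon
  have hwlyn : IsLyndon w := by
    apply lyndon_of_lt_suffix hwne
    intro a b ha hb hab
    have htw : m = tl a ++ tl b := by rw [← htlw, hab, FreeMonoid.toList_mul]
    have hane : tl a ≠ [] := (word_ne_one_iff a).mp ha
    have hbne : tl b ≠ [] := (word_ne_one_iff b).mp hb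
    have hbdrop : tl b = l.drop (i₀ + (tl a).length) := by
      rw [← List.drop_drop, hdrop, htw, List.drop_left]
    have hi : 0 < i₀ + (tl a).length ∧ i₀ + (tl a).length < l.length := by
      constructor
      · omega
      · have h1 : m.length = (tl a).length + (tl b).length := by
          rw [htw, List.length_append]
        have := List.length_pos_iff.mpr hbne
        omega
    have hnot : ¬ List.Lex (· < ·) (tl b) m := by
      rw [hbdrop]; exact hminkey _ hi.1 hi.2
    rcases trichotomous_of (List.Lex (· < ·)) m (tl b) with h | h | h
    · unfold wlt; rw [htlw]; exact h
    · exfalso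
      have h1 : m.length = (tl a).length + (tl b).length := by rw [htw, List.length_append]
      have := List.length_pos_iff.mpr hane
      have := congrArg List.length h
      omega
    · exact absurd h hnot
  -- v is Lyndon
  have hvlyn : IsLyndon v := by
    apply lyndon_of_lt_suffix hvne
    intro a b ha hb hab
    have hane : tl a ≠ [] := (word_ne_one_iff a).mp ha
    have hbne : tl b ≠ [] := (word_ne_one_iff b).mp hb
    have htv : tl v = tl a ++ tl b := by rw [hab, FreeMonoid.toList_mul]
    have hu2 : u = a * (b * w) := by rw [huvw, hab, mul_assoc]
    have hbwne : b * w ≠ 1 := by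
      rw [word_ne_one_iff, FreeMonoid.toList_mul]
      intro h0
      exact hbne (List.append_eq_nil_iff.mp h0).1
    have hsuf : wlt u (b * w) := lyndon_lt_suffix hu ha hbwne hu2
    have hsuf' : List.Lex (· < ·) ((tl a ++ tl b) ++ m) (tl b ++ m) := by
      have := hsuf; unfold wlt at this
      rw [FreeMonoid.toList_mul, htlw] at this
      have htu : tl u = (tl a ++ tl b) ++ m := by
        rw [← hl]
        conv_lhs => rw [← List.take_append_drop i₀ l, hdrop]
        rw [← htlv, htv]
      rwa [htu] at this
    rcases lex_unappend (tl a ++ tl b) (tl b) m m hsuf' with h1 | h2 | h3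
    · unfold wlt; rw [htv]; exact h1
    · exfalso
      have := h2.length_le
      rw [List.length_append] at this
      have := List.length_pos_iff.mpr hane
      omega
    · exfalso
      obtain ⟨c, hc⟩ := h3
      have hcne : c ≠ [] := by
        intro h0
        rw [h0, List.append_nil] at hc
        have := congrArg List.length hc
        rw [List.length_append] at this
        have := List.length_pos_iff.mpr hane
        omega
      have hclex : List.Lex (· < ·) (c ++ m) m := by
        apply lex_cancel (tl b)
        rw [← List.append_assoc, hc]
        exact hsuf'
      have hcdrop : c ++ m = l.drop (tl b).length := by
        have htu : l = tl b ++ (c ++ m) := by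
          conv_lhs => rw [← List.take_append_drop i₀ l, hdrop]
          rw [← htlv, htv, ← hc, List.append_assoc]
        rw [htu, List.drop_left]
      have hblt : (tl b).length < l.length := by
        have := congrArg List.length hcdrop
        rw [List.length_append, List.length_drop] at this
        have := List.length_pos_iff.mpr hcne
        have hml : 0 < m.length := by
          rw [hmlen]; omega
        omega
      have := hminkey (tl b).length (List.length_pos_iff.mpr hbne) hblt
      rw [← hcdrop] at this
      exact this hclex
  exact ⟨v, w, hvlyn, hwlyn, huvw⟩

lemma exists_shirshov {u : FreeMonoid (Fin n)} (hu : IsLyndon u)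
    (h2 : 2 ≤ FreeMonoid.length u) : ∃ v w : FreeMonoid (Fin n), IsShirshov u v w := by
  set S : Set ℕ := {m | ∃ v w : FreeMonoid (Fin n),
    IsLyndon v ∧ IsLyndon w ∧ u = v * w ∧ FreeMonoid.length v = m} with hS
  have hSne : S.Nonempty := by
    obtain ⟨v, w, hv, hw, huvw⟩ := exists_lyndon_factor hu h2
    exact ⟨FreeMonoid.length v, v, w, hv, hw, huvw, rfl⟩
  obtain ⟨v, w, hv, hw, huvw, hvl⟩ := Nat.sInf_mem hSne
  refine ⟨v, w, hv, hw, huvw, fun v' w' hv' hw' huvw' => ?_⟩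
  rw [hvl]
  exact Nat.sInf_le ⟨v', w', hv', hw', huvw', rfl⟩

/-! ### Algebra part -/

variable (F : Type) [Field F]

/-- `ok s u w'` : `w'` is at least `u` (strictly greater if `s = true`). -/
def ok (s : Bool) (u w' : FreeMonoid (Fin n)) : Prop :=
  wlt u w' ∨ (s = false ∧ w' = u)

/-- generating set of words`≥ u` (or `> u`) of the same length as `u`. -/
def gen (s : Bool) (u : FreeMonoid (Fin n)) : Set (MonoidAlgebra F (FreeMonoid (Fin n))) :=
  {x | ∃ w', FreeMonoid.length w' = FreeMonoid.length u ∧ ok s u w' ∧ x = wordOf F w'}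

lemma wlt_mul_right {u w₁ : FreeMonoid (Fin n)} (h : wlt u w₁)
    (hlen : FreeMonoid.length w₁ = FreeMonoid.length u) (b w₂ : FreeMonoid (Fin n)) :
    wlt (u * b) (w₁ * w₂) := by
  unfold wlt at h ⊢
  rw [FreeMonoid.toList_mul, FreeMonoid.toList_mul]
  exact lex_append_all h (le_of_eq hlen) _ _

lemma ok_mul {s₁ s₂ : Bool} {a b w₁ w₂ : FreeMonoid (Fin n)}
    (hl₁ : FreeMonoid.length w₁ = FreeMonoid.length a) (h₁ : ok s₁ a w₁)
    (hl₂ : FreeMonoid.length w₂ = FreeMonoid.length b) (h₂ : ok s₂ b w₂) :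
    ok (s₁ || s₂) (a * b) (w₁ * w₂) := by
  rcases h₁ with h₁ | ⟨hs₁, rfl⟩
  · exact Or.inl (wlt_mul_right h₁ hl₁ b w₂)
  · rcases h₂ with h₂ | ⟨hs₂, rfl⟩
    · left
      unfold wlt at h₂ ⊢
      rw [FreeMonoid.toList_mul, FreeMonoid.toList_mul]
      exact List.Lex.append_left _ h₂ _
    · right
      exact ⟨by rw [hs₁, hs₂]; rfl, rfl⟩

lemma wordOf_mul (a b : FreeMonoid (Fin n)) :
    wordOf F a * wordOf F b = wordOf F (a * b) := by
  unfold wordOf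
  rw [← map_mul]

lemma span_gen_mul {s₁ s₂ : Bool} {a b : FreeMonoid (Fin n)}
    {x y : MonoidAlgebra F (FreeMonoid (Fin n))}
    (hx : x ∈ Submodule.span F (gen F s₁ a)) (hy : y ∈ Submodule.span F (gen F s₂ b)) :
    x * y ∈ Submodule.span F (gen F (s₁ || s₂) (a * b)) := by
  induction hx using Submodule.span_induction with
  | mem x hxm =>
      induction hy using Submodule.span_induction with
      | mem y hym =>
          obtain ⟨w₁, hl₁, ho₁, rfl⟩ := hxm
          obtain ⟨w₂, hl₂, ho₂, rfl⟩ := hym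
          rw [wordOf_mul]
          apply Submodule.subset_span
          refine ⟨w₁ * w₂, ?_, ok_mul hl₁ ho₁ hl₂ ho₂, rfl⟩
          rw [FreeMonoid.length_mul, FreeMonoid.length_mul, hl₁, hl₂]
      | zero => rw [mul_zero]; exact Submodule.zero_mem _
      | add y z _ _ hy hz => rw [mul_add]; exact Submodule.add_mem _ hy hz
      | smul c y _ hy => rw [mul_smul_comm]; exact Submodule.smul_mem _ _ hy
  | zero => rw [zero_mul]; exact Submodule.zero_mem _
  | add x z _ _ hx hz => rw [add_mul]; exact Submodule.add_mem _ hx hz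
  | smul c x _ hx => rw [smul_mul_assoc]; exact Submodule.smul_mem _ _ hx

lemma gen_subset {u u' : FreeMonoid (Fin n)} (h : wlt u u')
    (hlen : FreeMonoid.length u' = FreeMonoid.length u) (s : Bool) :
    gen F s u' ⊆ gen F true u := by
  rintro x ⟨w', hl, hok, rfl⟩
  refine ⟨w', by rw [hl, hlen], Or.inl ?_, rfl⟩
  rcases hok with h' | ⟨_, rfl⟩
  · exact wlt_trans h h'
  · exact h

lemma gen_true_subset (u : FreeMonoid (Fin n)) (s : Bool) : gen F true u ⊆ gen F s u := by
  rintro x ⟨w', hl, hok, rfl⟩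
  rcases hok with h' | ⟨h0, _⟩
  · exact ⟨w', hl, Or.inl h', rfl⟩
  · exact absurd h0 (by simp)

lemma chiF_ne_zero (q : Fin n → Fin n → F) (hq : ∀ k l, q k l ≠ 0) (d e : Fin n → ℕ) :
    chiF F q d e ≠ 0 := by
  unfold chiF
  rw [Finset.prod_ne_zero_iff]
  intro k _
  rw [Finset.prod_ne_zero_iff]
  intro l _
  exact pow_ne_zero _ (hq k l)

/-- Key: the bracket of a Lyndon word is a nonzero multiple of the word plus a
combination of strictly larger words of the same length. -/
lemma br_leading (q : Fin n → Fin n → F) (hq : ∀ k l, q k l ≠ 0)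
    (br : FreeMonoid (Fin n) → MonoidAlgebra F (FreeMonoid (Fin n)))
    (hbr1 : ∀ k : Fin n, br (FreeMonoid.of k) = wordOf F (FreeMonoid.of k))
    (hbr2 : ∀ u v w : FreeMonoid (Fin n), IsLyndon u → 2 ≤ FreeMonoid.length u →
      IsShirshov u v w →
      br u = br w * br v - chiF F q (degw w) (degw v) • (br v * br w)) :
    ∀ N : ℕ, ∀ u : FreeMonoid (Fin n), FreeMonoid.length u ≤ N → IsLyndon u →
      ∃ c : F, c ≠ 0 ∧ ∃ y ∈ Submodule.span F (gen F true u),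
        br u = c • wordOf F u + y := by
  intro N
  induction N with
  | zero =>
      intro u hlen hu
      exact absurd hlen (by have := len_pos_of_ne_one hu.1; omega)
  | succ N ih =>
      intro u hlen hu
      rcases Nat.lt_or_ge (FreeMonoid.length u) (N + 1) with h | h
      · exact ih u (by omega) hu
      have hlenu : FreeMonoid.length u = N + 1 := by omega
      rcases Nat.lt_or_ge (FreeMonoid.length u) 2 with h1 | h2
      · -- length 1
        have hl1 : FreeMonoid.length u = 1 := by
          have := len_pos_of_ne_one hu.1; omega
        obtain ⟨k, hk⟩ := List.length_eq_one_iff.mp hl1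
        have huk : u = FreeMonoid.of k := by
          apply FreeMonoid.toList.injective
          rw [FreeMonoid.toList_of]
          exact hk
        refine ⟨1, one_ne_zero, 0, Submodule.zero_mem _, ?_⟩
        rw [huk, hbr1, one_smul, add_zero]
      · -- length ≥ 2
        obtain ⟨v, w, hsh⟩ := exists_shirshov hu h2
        obtain ⟨hvlyn, hwlyn, huvw, hmin⟩ := hsh
        have hlensum : FreeMonoid.length u = FreeMonoid.length v + FreeMonoid.length w := by
          rw [huvw, FreeMonoid.length_mul]
        have hvpos := len_pos_of_ne_one hvlyn.1
        have hwpos := len_pos_of_ne_one hwlyn.1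
        obtain ⟨cv, hcv, yv, hyv, hv⟩ := ih v (by omega) hvlyn
        obtain ⟨cw, hcw, yw, hyw, hw⟩ := ih w (by omega) hwlyn
        set p := chiF F q (degw w) (degw v) with hp
        have hpne : p ≠ 0 := chiF_ne_zero F q hq _ _
        refine ⟨-(p * (cv * cw)), by simp [hpne, hcv, hcw], ?_⟩
        -- membership pieces
        have hbrv : br v ∈ Submodule.span F (gen F false v) := by
          rw [hv]
          refine Submodule.add_mem _ (Submodule.smul_mem _ _ (Submodule.subset_span
            ⟨v, rfl, Or.inr ⟨rfl, rfl⟩, rfl⟩)) ?_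
          exact Submodule.span_mono (gen_true_subset F v false) hyv
        have hbrw : br w ∈ Submodule.span F (gen F false w) := by
          rw [hw]
          refine Submodule.add_mem _ (Submodule.smul_mem _ _ (Submodule.subset_span
            ⟨w, rfl, Or.inr ⟨rfl, rfl⟩, rfl⟩)) ?_
          exact Submodule.span_mono (gen_true_subset F w false) hyw
        have hwordv : wordOf F v ∈ Submodule.span F (gen F false v) :=
          Submodule.subset_span ⟨v, rfl, Or.inr ⟨rfl, rfl⟩, rfl⟩
        have hA : br w * br v ∈ Submodule.span F (gen F true u) := by
          have h0 : br w * br v ∈ Submodule.span F (gen F (false || false) (w * v)) :=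
            span_gen_mul F hbrw hbrv
          have hwv : wlt u (w * v) := hu.2 v w hvlyn.1 hwlyn.1 huvw
          have hlenwv : FreeMonoid.length (w * v) = FreeMonoid.length u := by
            rw [FreeMonoid.length_mul]; omega
          exact Submodule.span_mono (gen_subset F hwv hlenwv _) h0
        have hB : wordOf F v * yw ∈ Submodule.span F (gen F true u) := by
          have h0 : wordOf F v * yw ∈ Submodule.span F (gen F (false || true) (v * w)) :=
            span_gen_mul F hwordv hyw
          rwa [← huvw] at h0
        have hC : yv * br w ∈ Submodule.span F (gen F true u) := by
          have h0 : yv * br w ∈ Submodule.span F (gen F (true || false) (v * w)) :=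
            span_gen_mul F hyv hbrw
          rwa [← huvw] at h0
        refine ⟨br w * br v + (-(p * cv)) • (wordOf F v * yw) + (-p) • (yv * br w),
          Submodule.add_mem _ (Submodule.add_mem _ hA (Submodule.smul_mem _ _ hB))
            (Submodule.smul_mem _ _ hC), ?_⟩
        have hword : wordOf F u = wordOf F v * wordOf F w := by
          rw [huvw, wordOf_mul]
        rw [hbr2 u v w hu h2 ⟨hvlyn, hwlyn, huvw, hmin⟩, ← hp, hword]
        rw [hv, hw]
        simp only [mul_add, add_mul, smul_add, mul_smul_comm, smul_mul_assoc, smul_smul]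
        module

lemma len_prod (L : List (FreeMonoid (Fin n))) :
    FreeMonoid.length L.prod = (L.map FreeMonoid.length).sum := by
  induction L with
  | nil => rfl
  | cons a L ih => rw [List.prod_cons, FreeMonoid.length_mul, List.map_cons, List.sum_cons, ih]

lemma prod_mem_span (q : Fin n → Fin n → F) (hq : ∀ k l, q k l ≠ 0)
    (br : FreeMonoid (Fin n) → MonoidAlgebra F (FreeMonoid (Fin n)))
    (hbr1 : ∀ k : Fin n, br (FreeMonoid.of k) = wordOf F (FreeMonoid.of k))
    (hbr2 : ∀ u v w : FreeMonoid (Fin n), IsLyndon u → 2 ≤ FreeMonoid.length u →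
      IsShirshov u v w →
      br u = br w * br v - chiF F q (degw w) (degw v) • (br v * br w)) :
    ∀ L : List (FreeMonoid (Fin n)), (∀ v ∈ L, IsLyndon v) →
      (L.map br).prod ∈ Submodule.span F (gen F false L.prod) := by
  intro L
  induction L with
  | nil =>
      intro _
      simp only [List.map_nil, List.prod_nil]
      apply Submodule.subset_span
      refine ⟨1, rfl, Or.inr ⟨rfl, rfl⟩, ?_⟩
      unfold wordOf
      rw [map_one]
  | cons a L ih =>
      intro hall
      have halyn : IsLyndon a := hall a List.mem_cons_self
      have hlen := len_pos_of_ne_one halyn.1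
      obtain ⟨c, hc, y, hy, heq⟩ := br_leading F q hq br hbr1 hbr2
        (FreeMonoid.length a) a le_rfl halyn
      have hbra : br a ∈ Submodule.span F (gen F false a) := by
        rw [heq]
        refine Submodule.add_mem _ (Submodule.smul_mem _ _ (Submodule.subset_span
          ⟨a, rfl, Or.inr ⟨rfl, rfl⟩, rfl⟩)) ?_
        exact Submodule.span_mono (gen_true_subset F a false) hy
      have hrest := ih (fun v hv => hall v (List.mem_cons_of_mem a hv))
      have := span_gen_mul F hbra hrest
      simpa only [List.map_cons, List.prod_cons, Bool.or_false] using this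

lemma wlt_prefix_ext {u v : FreeMonoid (Fin n)} (h : wlt u v)
    (hlen : FreeMonoid.length v ≤ FreeMonoid.length u) (t : FreeMonoid (Fin n)) :
    wlt u (v * t) := by
  unfold wlt at h ⊢
  rw [FreeMonoid.toList_mul]
  have := lex_append_all h hlen [] (tl t)
  rwa [List.append_nil] at this

end Stmt11Aux

open Stmt11Aux

/-- every Lyndon word that is standard w.r.t. `R` is hard w.r.t. `R`. -/
theorem stmt_11 (F : Type) [Field F] [CharZero F] (n : ℕ) (hn : 1 ≤ n)
    (q : Fin n → Fin n → F) (hq : ∀ k l, q k l ≠ 0)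
    (R : Type) [Ring R] [Algebra F R]
    (π : MonoidAlgebra F (FreeMonoid (Fin n)) →ₐ[F] R)
    (hπ : Function.Surjective π) (hI : HomogKer F π)
    (br : FreeMonoid (Fin n) → MonoidAlgebra F (FreeMonoid (Fin n)))
    (hbr1 : ∀ k : Fin n, br (FreeMonoid.of k) = wordOf F (FreeMonoid.of k))
    (hbr2 : ∀ u v w : FreeMonoid (Fin n), IsLyndon u → 2 ≤ FreeMonoid.length u →
      IsShirshov u v w →
      br u = br w * br v - chiF F q (degw w) (degw v) • (br v * br w))
    (u : FreeMonoid (Fin n)) (hu : IsLyndon u) (hstd : IsStandard F π u) :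
    IsHard F π br u := by
  intro hmem
  set Sπ : Submodule F R := Submodule.span F
    { y : R | ∃ w : FreeMonoid (Fin n),
        FreeMonoid.length w = FreeMonoid.length u ∧ wlt u w ∧ y = π (wordOf F w) } with hSπ
  -- pushing spans of `gen true u` through π lands in Sπ
  have hpush : ∀ x : MonoidAlgebra F (FreeMonoid (Fin n)),
      x ∈ Submodule.span F (gen F true u) → π x ∈ Sπ := by
    intro x hx
    have h1 : π x ∈ Submodule.span F (π '' gen F true u) :=
      Submodule.apply_mem_span_image_of_mem_span (π.toLinearMap) hx
    refine Submodule.span_le.mpr ?_ h1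
    rintro y ⟨x', ⟨w', hl, hok, rfl⟩, rfl⟩
    apply Submodule.subset_span
    refine ⟨w', hl, ?_, rfl⟩
    rcases hok with h' | ⟨h0, _⟩
    · exact h'
    · exact absurd h0 (by simp)
  -- the hard generating set is contained in Sπ
  have hsub : { y : R | ∃ L : List (FreeMonoid (Fin n)), L ≠ [] ∧
        (∀ v ∈ L, IsLyndon v ∧ wlt u v) ∧
        (L.map FreeMonoid.length).sum = FreeMonoid.length u ∧
        y = π ((L.map br).prod) } ⊆ ↑Sπ := by
    rintro y ⟨L, hL0, hLall, hLsum, rfl⟩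
    obtain ⟨u₁, rest, rfl⟩ := List.exists_cons_of_ne_nil hL0
    have hu₁ := hLall u₁ List.mem_cons_self
    have hlen1 : FreeMonoid.length u₁ ≤ FreeMonoid.length u := by
      rw [← hLsum, List.map_cons, List.sum_cons]
      exact Nat.le_add_right _ _
    have hwltprod : wlt u ((u₁ :: rest).prod) := by
      rw [List.prod_cons]
      exact wlt_prefix_ext hu₁.2 hlen1 _
    have hlenprod : FreeMonoid.length ((u₁ :: rest).prod) = FreeMonoid.length u := by
      rw [len_prod, hLsum]
    have h1 : ((u₁ :: rest).map br).prod ∈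
        Submodule.span F (gen F false ((u₁ :: rest).prod)) :=
      prod_mem_span F q hq br hbr1 hbr2 _ (fun v hv => (hLall v hv).1)
    have h2 : ((u₁ :: rest).map br).prod ∈ Submodule.span F (gen F true u) :=
      Submodule.span_mono (gen_subset F hwltprod hlenprod false) h1
    exact hpush _ h2
  have hbig : π (br u) ∈ Sπ := Submodule.span_le.mpr hsub hmem
  obtain ⟨c, hc, y, hy, heq⟩ := br_leading F q hq br hbr1 hbr2
    (FreeMonoid.length u) u le_rfl hu
  have hyπ : π y ∈ Sπ := hpush y hy
  have hcsmul : c • π (wordOf F u) ∈ Sπ := by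
    have heq2 : π (br u) = c • π (wordOf F u) + π y := by
      rw [heq, map_add, map_smul]
    have : c • π (wordOf F u) = π (br u) - π y := by rw [heq2]; abel
    rw [this]
    exact Submodule.sub_mem _ hbig hyπ
  have hmemu : π (wordOf F u) ∈ Sπ := by
    have := Sπ.smul_mem c⁻¹ hcsmul
    rwa [smul_smul, inv_mul_cancel₀ hc, one_smul] at this
  exact hstd hmemu

end
end

section
/- Let g be the Lie subalgebra of R (viewed as a Lie algebra under the commutator bracket [x,y]⁻ = y·x − x·y) generated by the images π(x_1), …, π(x_n). If the set of Lyndon words that are standard with respect to R is infinite, then g is infinite-dimensional over F. -/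
noncomputable section

attribute [local instance 100] LieRing.ofAssociativeRing

namespace StdLyndon

open List

variable {α : Type*} [LinearOrder α]

/-- `a` is smaller than `b` because of a strict character difference. -/
def chlt (a b : List α) : Prop :=
  ∃ (p : List α) (x y : α) (s t : List α), x < y ∧ a = p ++ x :: s ∧ b = p ++ y :: t

theorem chlt.lex {a b : List α} (h : chlt a b) : List.Lex (·<·) a b := by
  obtain ⟨p, x, y, s, t, hxy, rfl, rfl⟩ := h
  induction p with
  | nil => exact List.Lex.rel hxy
  | cons c p ih => exact List.Lex.cons ih

theorem chlt.append {a b : List α} (h : chlt a b) (s t : List α) :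
    chlt (a ++ s) (b ++ t) := by
  obtain ⟨p, x, y, s', t', hxy, rfl, rfl⟩ := h
  exact ⟨p, x, y, s' ++ s, t' ++ t, hxy, by simp, by simp⟩

theorem chlt.append_right {a b : List α} (h : chlt a b) (t : List α) :
    chlt a (b ++ t) := by
  obtain ⟨p, x, y, s', t', hxy, rfl, rfl⟩ := h
  exact ⟨p, x, y, s', t' ++ t, hxy, rfl, by simp⟩

theorem lex_cases {a b : List α} (h : List.Lex (·<·) a b) :
    chlt a b ∨ ∃ t, t ≠ [] ∧ b = a ++ t := by
  induction h with
  | nil => exact Or.inr ⟨_ :: _, by simp, rfl⟩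
  | @cons c l₁ l₂ h ih =>
    rcases ih with ⟨p, x, y, s, t, hxy, rfl, rfl⟩ | ⟨t, ht, rfl⟩
    · exact Or.inl ⟨c :: p, x, y, s, t, hxy, rfl, rfl⟩
    · exact Or.inr ⟨t, ht, rfl⟩
  | @rel a₁ l₁ a₂ l₂ h => exact Or.inl ⟨[], a₁, a₂, l₁, l₂, h, rfl, rfl⟩

theorem chlt_of_lex_of_le {a b : List α} (h : List.Lex (·<·) a b)
    (hl : b.length ≤ a.length) : chlt a b := by
  rcases lex_cases h with h' | ⟨t, ht, rfl⟩
  · exact h'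
  · exfalso
    have := List.length_append (as := a) (bs := t)
    have ht' : 0 < t.length := List.length_pos_iff.2 ht
    omega

theorem lex_append_left {a b : List α} (p : List α) (h : List.Lex (·<·) a b) :
    List.Lex (·<·) (p ++ a) (p ++ b) := by
  induction p with
  | nil => exact h
  | cons c p ih => exact List.Lex.cons ih

theorem lex_of_append_left {a b : List α} (p : List α)
    (h : List.Lex (·<·) (p ++ a) (p ++ b)) : List.Lex (·<·) a b := by
  induction p with
  | nil => exact h
  | cons c p ih => exact ih (List.lex_cons_iff.1 h)

/-- Lyndon predicate on lists (rotation form). -/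
def LyndonL (l : List α) : Prop :=
  l ≠ [] ∧ ∀ p q : List α, p ≠ [] → q ≠ [] → l = p ++ q → List.Lex (·<·) l (q ++ p)

/-- A Lyndon word is smaller than each of its proper nonempty suffixes. -/
theorem LyndonL.lex_suffix {l p s : List α} (h : LyndonL l) (hp : p ≠ []) (hs : s ≠ [])
    (hl : l = p ++ s) : List.Lex (·<·) l s := by
  have hrot : List.Lex (·<·) l (s ++ p) := h.2 p s hp hs hl
  rcases lt_trichotomy l s with h1 | h1 | h1
  · exact h1
  · exfalso
    have h2 := congrArg List.length h1
    have h3 := List.length_pos_iff.2 hp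
    rw [hl] at h2
    simp only [List.length_append] at h2
    omega
  · -- Lex s l
    exfalso
    rcases lex_cases h1 with h2 | ⟨t, ht, hlst⟩
    · have := (h2.append p []).lex
      simp only [List.append_nil] at this
      exact asymm_of (List.Lex (·<·)) hrot this
    · -- l = s ++ t
      have hlen : t.length = p.length := by
        have e1 := congrArg List.length hlst
        have e2 := congrArg List.length hl
        rw [e2] at e1
        simp only [List.length_append] at e1
        omega
      have hrot2 : List.Lex (·<·) l (t ++ s) := h.2 s t hs ht hlst
      -- from hrot : Lex (s++t) (s++p), get Lex t p
      have htp : List.Lex (·<·) t p := lex_of_append_left s (by rw [← hlst]; exact hrot)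
      have h3 : chlt t p := chlt_of_lex_of_le htp (le_of_eq hlen.symm)
      have h4 : List.Lex (·<·) (t ++ s) (p ++ s) := (h3.append s s).lex
      rw [← hl] at h4
      exact asymm_of (List.Lex (·<·)) hrot2 h4

/-- Converse: smaller than all proper nonempty suffixes implies Lyndon. -/
theorem lyndonL_of_suffix {l : List α} (hne : l ≠ [])
    (h : ∀ p s : List α, p ≠ [] → s ≠ [] → l = p ++ s → List.Lex (·<·) l s) :
    LyndonL l := by
  refine ⟨hne, fun p q hp hq hl => ?_⟩
  have h1 : List.Lex (·<·) l q := h p q hp hq hl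
  have h2 : chlt l q := by
    apply chlt_of_lex_of_le h1
    have h3 := congrArg List.length hl
    have h4 := List.length_pos_iff.2 hp
    simp only [List.length_append] at h3
    omega
  exact (h2.append_right p).lex

/-- Standard factorization: a Lyndon word of length ≥ 2 factors into two
Lyndon words. -/
theorem LyndonL.factor {l : List α} (h : LyndonL l) (h2 : 2 ≤ l.length) :
    ∃ p q : List α, p ≠ [] ∧ q ≠ [] ∧ l = p ++ q ∧ LyndonL p ∧ LyndonL q := by
  classical
  set S : Set (List α) := {s | s ≠ [] ∧ s ≠ l ∧ s <:+ l} with hS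
  have hfin : S.Finite := by
    apply (l.tails.finite_toSet).subset
    intro s hs
    simpa [List.mem_tails] using hs.2.2
  have hne : S.Nonempty := by
    obtain ⟨a, l', rfl⟩ : ∃ a l', l = a :: l' := by
      cases l with
      | nil => simp at h2
      | cons a l' => exact ⟨a, l', rfl⟩
    refine ⟨l', ?_, ?_, ⟨[a], rfl⟩⟩
    · intro he
      rw [he] at h2
      simp at h2
    · intro he
      have := congrArg List.length he
      simp at this
  obtain ⟨w, hwS, hmin⟩ := Set.exists_min_image S id hfin hne
  obtain ⟨hwne, hwnl, v, hv⟩ := hwS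
  have hvne : v ≠ [] := by rintro rfl; exact hwnl hv
  have hwltl : w.length < l.length := by
    have := congrArg List.length hv
    have := List.length_pos_iff.2 hvne
    simp only [List.length_append] at *
    omega
  refine ⟨v, w, hvne, hwne, hv.symm, ?_, ?_⟩
  · -- v is Lyndon
    apply lyndonL_of_suffix hvne
    intro p s hp hs hvps
    have hlps : l = p ++ (s ++ w) := by rw [← hv, hvps, List.append_assoc]
    have hlsw : List.Lex (·<·) l (s ++ w) :=
      h.lex_suffix hp (by simp [hs]) hlps
    have hslt : s.length < v.length := by
      have := congrArg List.length hvps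
      have := List.length_pos_iff.2 hp
      simp only [List.length_append] at *
      omega
    rcases lt_trichotomy v s with h1 | h1 | h1
    · exact h1
    · exfalso; rw [h1] at hslt; omega
    · exfalso
      rcases lex_cases h1 with hc | ⟨t, ht, hvst⟩
      · have : List.Lex (·<·) (s ++ w) l := by
          rw [← hv]; exact (hc.append w w).lex
        exact asymm_of (List.Lex (·<·)) hlsw this
      · -- v = s ++ t
        have hltw : l = s ++ (t ++ w) := by rw [← hv, hvst, List.append_assoc]
        have htwS : t ++ w ∈ S := by
          refine ⟨by simp [ht], ?_, ⟨s, hltw.symm⟩⟩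
          intro he
          rw [he] at hltw
          have h6 := congrArg List.length hltw
          have h7 := List.length_pos_iff.2 hs
          simp only [List.length_append] at h6
          omega
        have hle : w ≤ t ++ w := hmin _ htwS
        have hneq : w ≠ t ++ w := by
          intro he
          have h6 := congrArg List.length he
          have h7 := List.length_pos_iff.2 ht
          simp only [List.length_append] at h6
          omega
        have h4 : List.Lex (·<·) w (t ++ w) := lt_of_le_of_ne hle hneq
        have h5 : List.Lex (·<·) (t ++ w) w := by
          apply lex_of_append_left s
          rw [← hltw]; exact hlsw
        exact asymm_of (List.Lex (·<·)) h4 h5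
  · -- w is Lyndon
    apply lyndonL_of_suffix hwne
    intro p s hp hs hwps
    have hsS : s ∈ S := by
      refine ⟨hs, ?_, List.IsSuffix.trans ⟨p, hwps.symm⟩ ⟨v, hv⟩⟩
      intro he
      have h6 := congrArg List.length hwps
      have h7 := List.length_pos_iff.2 hp
      have h8 := congrArg List.length he
      simp only [List.length_append] at h6
      omega
    have hle : w ≤ s := hmin _ hsS
    have hneq : w ≠ s := by
      intro he
      rw [he] at hwps
      have h6 := congrArg List.length hwps
      have h7 := List.length_pos_iff.2 hp
      simp only [List.length_append] at h6
      omega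
    exact lt_of_le_of_ne hle hneq

section Alg
variable (F : Type) [Field F] {n : ℕ}

theorem wordOf_mul (u v : FreeMonoid (Fin n)) :
    wordOf F (u * v) = wordOf F u * wordOf F v :=
  map_mul (MonoidAlgebra.of F (FreeMonoid (Fin n))) u v

/-- words of length `d` span -/
def Wd (n : ℕ) (d : ℕ) : Submodule F (MonoidAlgebra F (FreeMonoid (Fin n))) :=
  Submodule.span F {x | ∃ w : FreeMonoid (Fin n), FreeMonoid.length w = d ∧ x = wordOf F w}

/-- words strictly greater than `u`, same length -/
def Sgt (u : FreeMonoid (Fin n)) : Submodule F (MonoidAlgebra F (FreeMonoid (Fin n))) :=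
  Submodule.span F {x | ∃ w : FreeMonoid (Fin n),
    FreeMonoid.length w = FreeMonoid.length u ∧ wlt u w ∧ x = wordOf F w}

/-- words ≥ `u`, same length -/
def Sge (u : FreeMonoid (Fin n)) : Submodule F (MonoidAlgebra F (FreeMonoid (Fin n))) :=
  Submodule.span F {x | ∃ w : FreeMonoid (Fin n),
    FreeMonoid.length w = FreeMonoid.length u ∧ (u = w ∨ wlt u w) ∧ x = wordOf F w}

theorem Sgt_le_Sge (u : FreeMonoid (Fin n)) : Sgt F u ≤ Sge F u :=
  Submodule.span_mono (fun x ⟨w, h1, h2, h3⟩ => ⟨w, h1, Or.inr h2, h3⟩)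

theorem wordOf_mem_Sge (u : FreeMonoid (Fin n)) : wordOf F u ∈ Sge F u :=
  Submodule.subset_span ⟨u, rfl, Or.inl rfl, rfl⟩

theorem Sge_le_Wd (u : FreeMonoid (Fin n)) : Sge F u ≤ Wd F n (FreeMonoid.length u) :=
  Submodule.span_mono (fun x ⟨w, h1, _, h3⟩ => ⟨w, h1, h3⟩)

theorem wordOf_mem_Wd (u : FreeMonoid (Fin n)) : wordOf F u ∈ Wd F n (FreeMonoid.length u) :=
  Submodule.subset_span ⟨u, rfl, rfl⟩

theorem mul_left_Sgt {v w : FreeMonoid (Fin n)}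
    {x : MonoidAlgebra F (FreeMonoid (Fin n))} (hx : x ∈ Sgt F w) :
    wordOf F v * x ∈ Sgt F (v * w) := by
  have h := Submodule.mul_mem_mul (Submodule.mem_span_singleton_self (wordOf F v)) hx
  rw [Sgt, Submodule.span_mul_span] at h
  refine Submodule.span_le.2 ?_ h
  rintro z ⟨x', hx', y', ⟨w', hlen, hlt, rfl⟩, rfl⟩
  rcases hx' with rfl
  refine Submodule.subset_span ⟨v * w', ?_, ?_, (wordOf_mul F v w').symm⟩
  · simp only [FreeMonoid.length_mul, hlen]
  · exact lex_append_left (FreeMonoid.toList v) hlt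

theorem Sgt_mul_Wd {v w : FreeMonoid (Fin n)}
    {x y : MonoidAlgebra F (FreeMonoid (Fin n))} (hx : x ∈ Sgt F v)
    (hy : y ∈ Wd F n (FreeMonoid.length w)) :
    x * y ∈ Sgt F (v * w) := by
  have h := Submodule.mul_mem_mul hx hy
  rw [Sgt, Wd, Submodule.span_mul_span] at h
  refine Submodule.span_le.2 ?_ h
  rintro z ⟨x', ⟨v', hv'len, hv'lt, rfl⟩, y', ⟨w'', hw''len, rfl⟩, rfl⟩
  refine Submodule.subset_span ⟨v' * w'', ?_, ?_, (wordOf_mul F v' w'').symm⟩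
  · simp only [FreeMonoid.length_mul, hv'len, hw''len]
  · have h1 : chlt (FreeMonoid.toList v) (FreeMonoid.toList v') :=
      chlt_of_lex_of_le hv'lt (le_of_eq hv'len)
    exact (h1.append (FreeMonoid.toList w) (FreeMonoid.toList w'')).lex

theorem Sge_mul_Wd {v w : FreeMonoid (Fin n)}
    (huw : wlt (v * w) w) (hlen : FreeMonoid.length w < FreeMonoid.length (v * w))
    {x y : MonoidAlgebra F (FreeMonoid (Fin n))} (hx : x ∈ Sge F w)
    (hy : y ∈ Wd F n (FreeMonoid.length v)) :
    x * y ∈ Sgt F (v * w) := by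
  have h := Submodule.mul_mem_mul hx hy
  rw [Sge, Wd, Submodule.span_mul_span] at h
  refine Submodule.span_le.2 ?_ h
  rintro z ⟨x', ⟨w', hw'len, hw'ge, rfl⟩, y', ⟨v'', hv''len, rfl⟩, rfl⟩
  refine Submodule.subset_span ⟨w' * v'', ?_, ?_, (wordOf_mul F w' v'').symm⟩
  · simp only [FreeMonoid.length_mul, hw'len, hv''len, FreeMonoid.length_mul]
    omega
  · have h1 : wlt (v * w) w' := by
      rcases hw'ge with rfl | h2
      · exact huw
      · exact lt_trans (α := List (Fin n)) huw h2
    have h2 : chlt (FreeMonoid.toList (v * w)) (FreeMonoid.toList w') := by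
      apply chlt_of_lex_of_le h1
      show FreeMonoid.length w' ≤ FreeMonoid.length (v * w)
      omega
    exact (h2.append_right (FreeMonoid.toList v'')).lex


noncomputable def Lgen (n : ℕ) : LieSubalgebra F (MonoidAlgebra F (FreeMonoid (Fin n))) :=
  LieSubalgebra.lieSpan F _ (Set.range fun i : Fin n => wordOf F (FreeMonoid.of i))

variable {F}

theorem lyndonL_of_isLyndon {u : FreeMonoid (Fin n)} (h : IsLyndon u) :
    LyndonL (FreeMonoid.toList u) := by
  refine ⟨?_, ?_⟩
  · intro he
    exact h.1 (by rw [← FreeMonoid.ofList_toList u, he]; rfl)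
  · intro p q hp hq hl
    have h2 := h.2 (FreeMonoid.ofList p) (FreeMonoid.ofList q)
      (by intro he; exact hp (by rw [← FreeMonoid.toList_ofList (α := Fin n) p, he]; rfl))
      (by intro he; exact hq (by rw [← FreeMonoid.toList_ofList (α := Fin n) q, he]; rfl))
      (by rw [← FreeMonoid.ofList_toList u, hl]; rfl)
    exact h2

theorem isLyndon_of_lyndonL {u : FreeMonoid (Fin n)} (h : LyndonL (FreeMonoid.toList u)) :
    IsLyndon u := by
  refine ⟨?_, ?_⟩
  · intro he
    exact h.1 (by rw [he]; rfl)
  · intro v w hv hw hl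
    refine h.2 (FreeMonoid.toList v) (FreeMonoid.toList w) ?_ ?_ (by rw [hl]; rfl)
    · intro he; exact hv (by rw [← FreeMonoid.ofList_toList v, he]; rfl)
    · intro he; exact hw (by rw [← FreeMonoid.ofList_toList w, he]; rfl)

theorem key (F : Type) [Field F] {n : ℕ} :
    ∀ (d : ℕ) (u : FreeMonoid (Fin n)), FreeMonoid.length u = d → IsLyndon u →
    ∃ z r : MonoidAlgebra F (FreeMonoid (Fin n)),
      z ∈ Lgen F n ∧ r ∈ Sgt F u ∧ z = wordOf F u + r := by
  intro d
  induction d using Nat.strong_induction_on with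
  | _ d ih =>
  intro u hlen hu
  match d, hlen with
  | 0, hlen =>
    exfalso
    exact hu.1 (by rw [← FreeMonoid.ofList_toList u,
      List.length_eq_zero_iff.1 (show (FreeMonoid.toList u).length = 0 from hlen)]; rfl)
  | 1, hlen =>
    obtain ⟨a, ha⟩ := List.length_eq_one_iff.1 (show (FreeMonoid.toList u).length = 1 from hlen)
    have hua : u = FreeMonoid.of a := by rw [← FreeMonoid.ofList_toList u, ha]; rfl
    refine ⟨wordOf F u, 0, ?_, Submodule.zero_mem _, (add_zero _).symm⟩
    rw [hua]
    exact LieSubalgebra.subset_lieSpan ⟨a, rfl⟩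
  | (d + 2), hlen =>
    have hLL := lyndonL_of_isLyndon hu
    obtain ⟨p, q, hp, hq, hl, hLp, hLq⟩ := hLL.factor (by
      have h2 : (FreeMonoid.toList u).length = d + 2 := hlen
      omega)
    set v := FreeMonoid.ofList p with hvdef
    set w := FreeMonoid.ofList q with hwdef
    have huvw : u = v * w := by rw [← FreeMonoid.ofList_toList u, hl]; rfl
    have hpne : 0 < p.length := List.length_pos_iff.2 hp
    have hqne : 0 < q.length := List.length_pos_iff.2 hq
    have hlenu : p.length + q.length = d + 2 := by
      have := congrArg List.length hl
      simp only [List.length_append] at this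
      rw [show (FreeMonoid.toList u).length = d + 2 from hlen] at this
      omega
    have hlv : FreeMonoid.length v = p.length := rfl
    have hlw : FreeMonoid.length w = q.length := rfl
    have hv : IsLyndon v := isLyndon_of_lyndonL hLp
    have hw : IsLyndon w := isLyndon_of_lyndonL hLq
    obtain ⟨zv, rv, hzv, hrv, hzveq⟩ := ih p.length (by omega) v rfl hv
    obtain ⟨zw, rw', hzw, hrw, hzweq⟩ := ih q.length (by omega) w rfl hw
    have huw : wlt (v * w) w := by
      have := hLL.lex_suffix hp hq hl
      rw [huvw] at this
      exact this
    have hwlen : FreeMonoid.length w < FreeMonoid.length (v * w) := by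
      rw [FreeMonoid.length_mul, hlv, hlw]; omega
    have hprod : wordOf F (v * w) = wordOf F v * wordOf F w := wordOf_mul F v w
    -- memberships
    have t1 : wordOf F v * rw' ∈ Sgt F (v * w) := mul_left_Sgt F hrw
    have t2 : rv * wordOf F w ∈ Sgt F (v * w) := Sgt_mul_Wd F hrv (wordOf_mem_Wd F w)
    have t3 : rv * rw' ∈ Sgt F (v * w) :=
      Sgt_mul_Wd F hrv (Sge_le_Wd F w (Sgt_le_Sge F w hrw))
    have t4 : (wordOf F w + rw') * (wordOf F v + rv) ∈ Sgt F (v * w) :=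
      Sge_mul_Wd F huw hwlen
        (add_mem (wordOf_mem_Sge F w) (Sgt_le_Sge F w hrw))
        (add_mem (wordOf_mem_Wd F v) (Sge_le_Wd F v (Sgt_le_Sge F v hrv)))
    have hmem : ((wordOf F v + rv) * (wordOf F w + rw')
        - (wordOf F w + rw') * (wordOf F v + rv)) - wordOf F (v * w) ∈ Sgt F (v * w) := by
      have e : ((wordOf F v + rv) * (wordOf F w + rw')
          - (wordOf F w + rw') * (wordOf F v + rv)) - wordOf F (v * w)
          = wordOf F v * rw' + rv * wordOf F w + rv * rw'
            - (wordOf F w + rw') * (wordOf F v + rv) := by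
        rw [hprod]; noncomm_ring
      rw [e]
      exact sub_mem (add_mem (add_mem t1 t2) t3) t4
    refine ⟨⁅zv, zw⁆, ⁅zv, zw⁆ - wordOf F u, (Lgen F n).lie_mem hzv hzw, ?_, by abel⟩
    rw [huvw, Ring.lie_def, hzveq, hzweq]
    exact hmem

end Alg
end StdLyndon


namespace StdLyndon
section Main
variable (F : Type) [Field F] {n : ℕ}

theorem Sge_le_supported (u : FreeMonoid (Fin n)) :
    Sge F u ≤ Submodule.comap (MonoidAlgebra.coeffLinearEquiv F).toLinearMap (Finsupp.supported F F
      {w : FreeMonoid (Fin n) | FreeMonoid.length w = FreeMonoid.length u}) := by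
  refine Submodule.span_le.2 ?_
  rintro x ⟨w, hlen, _, rfl⟩
  rw [SetLike.mem_coe, Submodule.mem_comap, Finsupp.mem_supported]
  rw [wordOf, MonoidAlgebra.of_apply, LinearEquiv.coe_coe, MonoidAlgebra.coeffLinearEquiv_apply,
    MonoidAlgebra.coeff_single]
  refine subset_trans (Finset.coe_subset.2 Finsupp.support_single_subset) ?_
  intro a ha
  rw [Finset.coe_singleton, Set.mem_singleton_iff] at ha
  subst ha
  exact hlen

/-- `Finsupp.filter` by length `d`, as a linear map. -/
noncomputable def filterLM (d : ℕ) :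
    MonoidAlgebra F (FreeMonoid (Fin n)) →ₗ[F] MonoidAlgebra F (FreeMonoid (Fin n)) := by
  classical
  exact
  { toFun := fun x => MonoidAlgebra.ofCoeff
      (Finsupp.filter (fun w : FreeMonoid (Fin n) => FreeMonoid.length w = d) x.coeff)
    map_add' := fun x y => by
      rw [MonoidAlgebra.coeff_add, Finsupp.filter_add]; rfl
    map_smul' := fun c x => by
      rw [MonoidAlgebra.coeff_smul, Finsupp.filter_smul]; rfl }

theorem filterLM_of_supported {d d' : ℕ} {x : MonoidAlgebra F (FreeMonoid (Fin n))}
    (hx : x ∈ Submodule.comap (MonoidAlgebra.coeffLinearEquiv F).toLinearMap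
      (Finsupp.supported F F {w : FreeMonoid (Fin n) | FreeMonoid.length w = d})) :
    filterLM F d' x = if d = d' then x else 0 := by
  classical
  rw [Submodule.mem_comap, Finsupp.mem_supported] at hx
  by_cases h : d = d'
  · subst h
    simp only [if_pos rfl]
    show MonoidAlgebra.ofCoeff (Finsupp.filter _ x.coeff) = MonoidAlgebra.ofCoeff x.coeff
    congr 1
    rw [Finsupp.filter_eq_self_iff]
    intro a ha
    exact hx (Finsupp.mem_support_iff.2 ha)
  · simp only [if_neg h]
    show MonoidAlgebra.ofCoeff (Finsupp.filter _ x.coeff) = MonoidAlgebra.ofCoeff 0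
    congr 1
    rw [Finsupp.filter_eq_zero_iff]
    intro a hpa
    by_contra hne
    exact h ((hx (Finsupp.mem_support_iff.2 hne)).symm.trans hpa)

theorem finite_length_eq (d : ℕ) :
    {u : FreeMonoid (Fin n) | FreeMonoid.length u = d}.Finite := by
  have h := List.finite_length_eq (Fin n) d
  have hinj : Function.Injective (FreeMonoid.toList (α := Fin n)) := by
    intro a b hab
    rw [← FreeMonoid.ofList_toList a, hab, FreeMonoid.ofList_toList]
  exact Set.Finite.preimage (hinj.injOn) h

end Main
end StdLyndon

/-- if there are infinitely many standard Lyndon words, then the Lie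
subalgebra of `R` (with the commutator bracket) generated by the images of the
generators `x_1, …, x_n` is infinite-dimensional over `F`. -/
theorem stmt_13 (F : Type) [Field F] [CharZero F] (n : ℕ) (hn : 1 ≤ n)
    (R : Type) [Ring R] [Algebra F R]
    (π : MonoidAlgebra F (FreeMonoid (Fin n)) →ₐ[F] R)
    (hπ : Function.Surjective π) (hI : HomogKer F π)
    (hinf : {u : FreeMonoid (Fin n) | IsLyndon u ∧ IsStandard F π u}.Infinite) :
    ¬ FiniteDimensional F
      (LieSubalgebra.lieSpan F R
        (Set.range fun i : Fin n => π (wordOf F (FreeMonoid.of i)))) := by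
  classical
  intro hfd
  set g := LieSubalgebra.lieSpan F R
      (Set.range fun i : Fin n => π (wordOf F (FreeMonoid.of i))) with hgdef
  -- π maps the free Lie span into g
  have hmap : ∀ z ∈ StdLyndon.Lgen F n, π z ∈ g := by
    intro z hz
    have hle : StdLyndon.Lgen F n ≤ LieSubalgebra.comap π.toLieHom g := by
      apply LieSubalgebra.lieSpan_le.2
      rintro x ⟨i, rfl⟩
      show π (wordOf F (FreeMonoid.of i)) ∈ g
      exact LieSubalgebra.subset_lieSpan ⟨i, rfl⟩
    exact hle hz
  set s := {u : FreeMonoid (Fin n) | IsLyndon u ∧ IsStandard F π u} with hsdef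
  -- lengths attained are infinite
  have hΛ : (FreeMonoid.length '' s).Infinite := by
    intro hfin
    apply hinf
    have hsub : s ⊆ ⋃ d ∈ FreeMonoid.length '' s,
        {u : FreeMonoid (Fin n) | FreeMonoid.length u = d} := by
      intro u hu
      exact Set.mem_biUnion ⟨u, hu, rfl⟩ rfl
    exact Set.Finite.subset (hfin.biUnion fun d _ => StdLyndon.finite_length_eq d) hsub
  let e := hΛ.natEmbedding
  have hchoice : ∀ k : ℕ, ∃ u : FreeMonoid (Fin n),
      u ∈ s ∧ FreeMonoid.length u = (e k : ℕ) := by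
    intro k
    obtain ⟨u, hu, hlen⟩ := (e k).2
    exact ⟨u, hu, hlen⟩
  choose U hUs hUlen using hchoice
  have hUinj : ∀ k m : ℕ, k ≠ m → FreeMonoid.length (U k) ≠ FreeMonoid.length (U m) := by
    intro k m hkm he
    apply hkm
    apply e.injective
    apply Subtype.ext
    rw [← hUlen k, ← hUlen m, he]
  have hzex : ∀ k : ℕ, ∃ z r : MonoidAlgebra F (FreeMonoid (Fin n)),
      z ∈ StdLyndon.Lgen F n ∧ r ∈ StdLyndon.Sgt F (U k) ∧ z = wordOf F (U k) + r :=
    fun k => StdLyndon.key F (FreeMonoid.length (U k)) (U k) rfl (hUs k).1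
  choose Z Rr hZL hRS hZeq using hzex
  -- π of Sgt lands in the "bigger words" span
  have hπS : ∀ (u : FreeMonoid (Fin n)) (x : MonoidAlgebra F (FreeMonoid (Fin n))),
      x ∈ StdLyndon.Sgt F u →
      π x ∈ Submodule.span F { y : R | ∃ w : FreeMonoid (Fin n),
        FreeMonoid.length w = FreeMonoid.length u ∧ wlt u w ∧ y = π (wordOf F w) } := by
    intro u x hx
    have h1 : π x ∈ Submodule.map π.toLinearMap (StdLyndon.Sgt F u) :=
      Submodule.mem_map_of_mem hx
    rw [StdLyndon.Sgt, Submodule.map_span] at h1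
    refine Submodule.span_le.2 ?_ h1
    rintro y ⟨x', ⟨w, h2, h3, rfl⟩, rfl⟩
    exact Submodule.subset_span ⟨w, h2, h3, by simp⟩
  have hne : ∀ k : ℕ, π (Z k) ≠ 0 := by
    intro k h0
    apply (hUs k).2
    have h1 : π (wordOf F (U k)) = - π (Rr k) := by
      have h2 := congrArg π (hZeq k)
      rw [h0, map_add] at h2
      rw [eq_neg_iff_add_eq_zero]
      exact h2.symm
    rw [h1]
    exact neg_mem (hπS (U k) (Rr k) (hRS k))
  -- homogeneity of the Z's
  have hZsupp : ∀ k : ℕ, Z k ∈ Submodule.comap (MonoidAlgebra.coeffLinearEquiv F).toLinearMap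
      (Finsupp.supported F F
      {w : FreeMonoid (Fin n) | FreeMonoid.length w = FreeMonoid.length (U k)}) := by
    intro k
    rw [hZeq k]
    exact StdLyndon.Sge_le_supported F (U k)
      (add_mem (StdLyndon.wordOf_mem_Sge F (U k))
        (StdLyndon.Sgt_le_Sge F (U k) (hRS k)))
  -- linear independence of the images
  have hli : LinearIndependent F (fun k : ℕ => π (Z k)) := by
    rw [linearIndependent_iff']
    intro t c hsum i₀ hi₀
    have h1 : π (∑ i ∈ t, c i • Z i) = 0 := by
      rw [map_sum]
      simpa only [map_smul] using hsum
    have h2 := hI _ h1 (FreeMonoid.length (U i₀))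
    have h3 : MonoidAlgebra.ofCoeff (Finsupp.filter
        (fun w : FreeMonoid (Fin n) => FreeMonoid.length w = FreeMonoid.length (U i₀))
        (∑ i ∈ t, c i • Z i).coeff) = c i₀ • Z i₀ := by
      have h4 : MonoidAlgebra.ofCoeff (Finsupp.filter
          (fun w : FreeMonoid (Fin n) => FreeMonoid.length w = FreeMonoid.length (U i₀))
          (∑ i ∈ t, c i • Z i).coeff)
          = StdLyndon.filterLM F (FreeMonoid.length (U i₀)) (∑ i ∈ t, c i • Z i) := rfl
      rw [h4, map_sum]
      rw [Finset.sum_eq_single i₀]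
      · rw [map_smul, StdLyndon.filterLM_of_supported F (hZsupp i₀), if_pos rfl]
      · intro b hb hbne
        rw [map_smul, StdLyndon.filterLM_of_supported F (hZsupp b),
          if_neg (hUinj b i₀ hbne), smul_zero]
      · intro hni₀
        exact absurd hi₀ hni₀
    rw [h3] at h2
    rw [map_smul] at h2
    rcases smul_eq_zero.1 h2 with hc | hc
    · exact hc
    · exact absurd hc (hne i₀)
  -- move into the subalgebra g
  have hli2 : LinearIndependent F (fun k : ℕ => (⟨π (Z k), hmap _ (hZL k)⟩ : g)) := by
    apply LinearIndependent.of_comp (g.toSubmodule.subtype)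
    exact hli
  haveI : Module.Finite F g := hfd
  have hcard := hli2.lt_aleph0_of_finite
  rw [Cardinal.mk_nat] at hcard
  exact lt_irrefl _ hcard


end
end
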